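/- arXiv:1509.05119 — 2 statements merged into one kernel-verified Lean document; each statement's English description precedes it below -/
import Mathlib

section
/- Let φ : [0,∞) → ℝ be continuous, C¹ on (0,∞) as a function of both variables φ(λ,y), with ∂φ/∂y > 0 and y ↦ (∂φ/∂λ)/(∂φ/∂y)(λ,y) non-decreasing for each λ > 0, and with τ₋(λ) = lim_{y→-∞} φ(λ,y) non-increasing and τ₊(λ) = lim_{y→+∞} φ(λ,y) either ≡ +∞ or non-decreasing and C¹. Let Y have a positive continuous density with log-concave survival function, satisfy E|φ(η,Y)| < ∞ and E[sup_{0<λ≤η} |∂φ/∂λ(λ,Y)|] < ∞ for all η > 0, and E[φ(λ,Y)] = 0 for all λ ≥ 0. Then (φ(λ,Y))_{λ≥0} is a centered process increasing in the mean residual life order. -/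
open MeasureTheory Set Filter Topology

namespace MRLPf



noncomputable def S (f : ℝ → ℝ) (z : ℝ) : ℝ := ∫ u in Set.Ici z, f u

variable {f : ℝ → ℝ}

theorem S_pos (hf_pos : ∀ x, 0 < f x) (hf_cont : Continuous f) (hf_int : Integrable f) (z : ℝ) :
    0 < S f z := by
  have h1 : ∫ t in z..(z+1), f t ≤ S f z := by
    rw [intervalIntegral.integral_of_le (by linarith)]
    apply setIntegral_mono_set (hf_int.integrableOn)
    · exact Eventually.of_forall fun x => (hf_pos x).le
    · exact Eventually.of_forall (fun x hx => hx.1.le)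
  refine lt_of_lt_of_le ?_ h1
  apply intervalIntegral.intervalIntegral_pos_of_pos_on (hf_cont.intervalIntegrable _ _)
    (fun x _ => hf_pos x) (by linarith)

theorem S_sub (hf_int : Integrable f) (a b : ℝ) :
    S f b - S f a = - ∫ t in a..b, f t := by
  have h : ∀ c : ℝ, S f c = (∫ u, f u) - ∫ u in Iic c, f u := by
    intro c
    have := integral_add_compl (measurableSet_Iic (a := c)) hf_int
    have hc : (Iic c)ᶜ = Ioi c := compl_Iic
    rw [hc] at this
    rw [S, integral_Ici_eq_integral_Ioi, ← this]; ring
  rw [h a, h b, ← intervalIntegral.integral_Iic_sub_Iic hf_int.integrableOn hf_int.integrableOn]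
  ring

theorem S_hasDerivAt (hf_cont : Continuous f) (hf_int : Integrable f) (z : ℝ) :
    HasDerivAt (S f) (-(f z)) z := by
  have h : ∀ c : ℝ, S f c = S f 0 - ∫ t in (0:ℝ)..c, f t := by
    intro c; have := S_sub hf_int 0 c; linarith
  have hd : HasDerivAt (fun c => ∫ t in (0:ℝ)..c, f t) (f z) z :=
    intervalIntegral.integral_hasDerivAt_right (hf_cont.intervalIntegrable _ _)
      (hf_cont.stronglyMeasurable.stronglyMeasurableAtFilter) hf_cont.continuousAt
  have : HasDerivAt (fun c => S f 0 - ∫ t in (0:ℝ)..c, f t) (-(f z)) z := by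
    simpa using (hd.const_sub (S f 0))
  exact this.congr_of_eventuallyEq (Eventually.of_forall fun c => (h c))

theorem S_antitone (hf_pos : ∀ x, 0 < f x) (hf_cont : Continuous f) (hf_int : Integrable f) :
    Antitone (S f) := by
  intro a b hab
  have := S_sub hf_int a b
  have hpos : 0 ≤ ∫ t in a..b, f t :=
    intervalIntegral.integral_nonneg hab (fun x _ => (hf_pos x).le)
  linarith

/-- Hazard rate monotonicity from log-concavity of the survival function. -/
theorem hazard (hf_pos : ∀ x, 0 < f x) (hf_cont : Continuous f) (hf_int : Integrable f)
    (hsurv : ConcaveOn ℝ Set.univ (fun z => Real.log (S f z)))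
    {a b : ℝ} (hab : a ≤ b) : f a * S f b ≤ f b * S f a := by
  have hSpos := S_pos hf_pos hf_cont hf_int
  have hd : ∀ z : ℝ, HasDerivAt (fun z => Real.log (S f z)) (-(f z) / S f z) z := by
    intro z
    exact (S_hasDerivAt hf_cont hf_int z).log (ne_of_gt (hSpos z))
  have hanti : AntitoneOn (deriv (fun z => Real.log (S f z))) univ :=
    hsurv.antitoneOn_deriv (fun x _ => (hd x).differentiableAt)
  have h2 := hanti (mem_univ a) (mem_univ b) hab
  rw [(hd a).deriv, (hd b).deriv] at h2
  rw [div_le_div_iff₀ (hSpos b) (hSpos a)] at h2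
  · nlinarith [hSpos a, hSpos b]


variable {Ω : Type*} [MeasurableSpace Ω] {P : Measure Ω} [IsProbabilityMeasure P]
  {Y : Ω → ℝ} {φ φl φy : ℝ → ℝ → ℝ} {x : ℝ}



variable {Ω : Type*} [MeasurableSpace Ω] {P : Measure Ω} [IsProbabilityMeasure P]
  {Y : Ω → ℝ} {f : ℝ → ℝ}

theorem f_integrable (hYmeas : Measurable Y)
    (hf_density : ∀ s : Set ℝ, MeasurableSet s →
      P (Y ⁻¹' s) = ENNReal.ofReal (∫ u in s, f u)) : Integrable f := by
  by_contra hni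
  have h := hf_density univ MeasurableSet.univ
  rw [preimage_univ, measure_univ] at h
  rw [Measure.restrict_univ] at h
  rw [integral_undef (by simpa using hni)] at h
  simp at h

theorem law (hYmeas : Measurable Y) (hf_pos : ∀ x, 0 < f x)
    (hf_density : ∀ s : Set ℝ, MeasurableSet s →
      P (Y ⁻¹' s) = ENNReal.ofReal (∫ u in s, f u)) :
    P.map Y = volume.withDensity (fun u => ENNReal.ofReal (f u)) := by
  have hf_int : Integrable f := f_integrable hYmeas hf_density
  ext s hs
  rw [Measure.map_apply hYmeas hs, hf_density s hs, withDensity_apply _ hs,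
    ← ofReal_integral_eq_lintegral_ofReal (hf_int.integrableOn)
      (Eventually.of_forall fun x => (hf_pos x).le)]

theorem lint_transfer (hYmeas : Measurable Y) (hf_pos : ∀ x, 0 < f x) (hf_cont : Continuous f)
    (hf_density : ∀ s : Set ℝ, MeasurableSet s →
      P (Y ⁻¹' s) = ENNReal.ofReal (∫ u in s, f u))
    (h : ℝ → ENNReal) (hh : Measurable h) :
    ∫⁻ ω, h (Y ω) ∂P = ∫⁻ u, h u * ENNReal.ofReal (f u) := by
  calc ∫⁻ ω, h (Y ω) ∂P = ∫⁻ u, h u ∂(P.map Y) := (lintegral_map hh hYmeas).symm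
  _ = ∫⁻ u, h u ∂(volume.withDensity (fun u => ENNReal.ofReal (f u))) := by
      rw [law hYmeas hf_pos hf_density]
  _ = ∫⁻ u, ((fun u => ENNReal.ofReal (f u)) * h) u :=
      lintegral_withDensity_eq_lintegral_mul volume
        (ENNReal.measurable_ofReal.comp hf_cont.measurable) hh
  _ = ∫⁻ u, h u * ENNReal.ofReal (f u) := by simp [mul_comm]

theorem P_singleton (hYmeas : Measurable Y)
    (hf_density : ∀ s : Set ℝ, MeasurableSet s →
      P (Y ⁻¹' s) = ENNReal.ofReal (∫ u in s, f u)) (c : ℝ) :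
    P (Y ⁻¹' {c}) = 0 := by
  rw [hf_density {c} (measurableSet_singleton c)]
  simp [integral_singleton]



/-- Middle regime: `φ l` takes values on both sides of `x`. -/
def Mid (φ : ℝ → ℝ → ℝ) (x l : ℝ) : Prop :=
  0 < l ∧ (∃ u, φ l u < x) ∧ (∃ u, x < φ l u)

/-- The root of `φ l · = x`. -/
noncomputable def yf (φ : ℝ → ℝ → ℝ) (x l : ℝ) : ℝ := sInf {u | x ≤ φ l u}

variable {φ φl φy : ℝ → ℝ → ℝ} {x : ℝ}

theorem strictMono_slice (hφy : ∀ l : ℝ, 0 < l → ∀ y : ℝ, HasDerivAt (fun y' => φ l y') (φy l y) y)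
    (hφy_pos : ∀ l : ℝ, 0 < l → ∀ y : ℝ, 0 < φy l y) {l : ℝ} (hl : 0 < l) :
    StrictMono (φ l) := by
  have : ∀ y, 0 < deriv (fun y' => φ l y') y := by
    intro y; rw [(hφy l hl y).deriv]; exact hφy_pos l hl y
  exact strictMono_of_deriv_pos this

theorem cont_slice (hφy : ∀ l : ℝ, 0 < l → ∀ y : ℝ, HasDerivAt (fun y' => φ l y') (φy l y) y)
    {l : ℝ} (hl : 0 < l) : Continuous (φ l) := by
  have : Differentiable ℝ (fun y' => φ l y') := fun y => (hφy l hl y).differentiableAt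
  exact this.continuous

theorem contAt_l (hφl : ∀ l : ℝ, 0 < l → ∀ y : ℝ, HasDerivAt (fun l' => φ l' y) (φl l y) l)
    {l : ℝ} (hl : 0 < l) (y : ℝ) : ContinuousAt (fun l' => φ l' y) l :=
  (hφl l hl y).differentiableAt.continuousAt

theorem yf_spec (hφy : ∀ l : ℝ, 0 < l → ∀ y : ℝ, HasDerivAt (fun y' => φ l y') (φy l y) y)
    (hφy_pos : ∀ l : ℝ, 0 < l → ∀ y : ℝ, 0 < φy l y) {l : ℝ} (hm : Mid φ x l) :
    φ l (yf φ x l) = x ∧ ∀ u, (x ≤ φ l u ↔ yf φ x l ≤ u) := by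
  obtain ⟨hl, ⟨y0, hy0⟩, ⟨y1, hy1⟩⟩ := hm
  have hsm := strictMono_slice hφy hφy_pos hl
  have hc := cont_slice hφy hl
  set C := {u | x ≤ φ l u} with hC
  have hne : y1 ∈ C := le_of_lt hy1
  have hbdd : BddBelow C := by
    refine ⟨y0, fun u hu => ?_⟩
    by_contra hlt
    push_neg at hlt
    exact absurd (lt_of_le_of_lt hu (lt_of_le_of_lt (hsm.monotone hlt.le) hy0)) (lt_irrefl x)
  have hclosed : IsClosed C := IsClosed.preimage hc isClosed_Ici
  have hmem : yf φ x l ∈ C := hclosed.csInf_mem ⟨y1, hne⟩ hbdd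
  have hy0lt : y0 < yf φ x l := by
    by_contra hle
    push_neg at hle
    exact absurd (lt_of_lt_of_le hy0 (le_trans hmem (le_of_eq rfl)))
      (not_lt.2 (hsm.monotone hle))
  have heq : φ l (yf φ x l) = x := by
    rcases intermediate_value_Icc hy0lt.le hc.continuousOn ⟨hy0.le, hmem⟩ with ⟨c, hcI, hcx⟩
    have hcC : c ∈ C := le_of_eq hcx.symm
    have h1 : yf φ x l ≤ c := csInf_le hbdd hcC
    have h2 : c = yf φ x l := le_antisymm hcI.2 h1
    rw [← h2, hcx]
  refine ⟨heq, fun u => ⟨fun h => csInf_le hbdd h, fun h => ?_⟩⟩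
  calc x = φ l (yf φ x l) := heq.symm
  _ ≤ φ l u := hsm.monotone h

theorem mid_up_closed
    (hφy : ∀ l : ℝ, 0 < l → ∀ y : ℝ, HasDerivAt (fun y' => φ l y') (φy l y) y)
    (hφy_pos : ∀ l : ℝ, 0 < l → ∀ y : ℝ, 0 < φy l y)
    {τm : ℝ → EReal}
    (hτm : ∀ l : ℝ, 0 < l → Tendsto (fun y => (φ l y : EReal)) atBot (nhds (τm l)))
    (hτm_anti : AntitoneOn τm (Set.Ioi (0:ℝ)))
    (hτp : (∀ l : ℝ, 0 < l → Tendsto (fun y => φ l y) atTop atTop) ∨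
      (∃ τp : ℝ → ℝ, (∀ l : ℝ, 0 < l → Tendsto (fun y => φ l y) atTop (nhds (τp l))) ∧
        MonotoneOn τp (Set.Ioi (0:ℝ)) ∧ ContDiffOn ℝ 1 τp (Set.Ioi (0:ℝ))))
    {l₁ l₂ : ℝ} (h1 : 0 < l₁) (h12 : l₁ ≤ l₂) (hm : Mid φ x l₁) : Mid φ x l₂ := by
  have h2 : 0 < l₂ := lt_of_lt_of_le h1 h12
  have hmono : ∀ l : ℝ, 0 < l → Monotone (φ l) :=
    fun l hl => (strictMono_slice hφy hφy_pos hl).monotone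
  refine ⟨h2, ?_, ?_⟩
  · by_contra hnot
    push_neg at hnot
    have hxτ2 : (x : EReal) ≤ τm l₂ := by
      refine ge_of_tendsto (hτm l₂ h2) ?_
      exact Eventually.of_forall fun u => by exact_mod_cast hnot u
    have hxτ1 : (x : EReal) ≤ τm l₁ := le_trans hxτ2 (hτm_anti (mem_Ioi.2 h1) (mem_Ioi.2 h2) h12)
    obtain ⟨u0, hu0⟩ := hm.2.1
    have hτφ : τm l₁ ≤ ((φ l₁ u0 : ℝ) : EReal) := by
      refine le_of_tendsto (hτm l₁ h1) ?_
      filter_upwards [eventually_le_atBot u0] with v hv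
      exact_mod_cast hmono l₁ h1 hv
    have : (x : EReal) ≤ (φ l₁ u0 : ℝ) := le_trans hxτ1 hτφ
    exact absurd hu0 (not_lt.2 (by exact_mod_cast this))
  · rcases hτp with hT | ⟨τp, hτp', hτp_mono, _⟩
    · obtain ⟨u, hu⟩ := (tendsto_atTop.1 (hT l₂ h2) (x + 1)).exists
      exact ⟨u, by linarith⟩
    · by_contra hnot
      push_neg at hnot
      have hτ2x : τp l₂ ≤ x :=
        le_of_tendsto (hτp' l₂ h2) (Eventually.of_forall fun u => hnot u)
      have hτ1x : τp l₁ ≤ x :=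
        le_trans (hτp_mono (mem_Ioi.2 h1) (mem_Ioi.2 h2) h12) hτ2x
      obtain ⟨u1, hu1⟩ := hm.2.2
      have : φ l₁ u1 ≤ τp l₁ := by
        refine ge_of_tendsto (hτp' l₁ h1) ?_
        filter_upwards [eventually_ge_atTop u1] with v hv
        exact hmono l₁ h1 hv
      linarith





variable {φ φl φy : ℝ → ℝ → ℝ} {x : ℝ}




theorem yf_contWithin
    (hφy : ∀ l : ℝ, 0 < l → ∀ y : ℝ, HasDerivAt (fun y' => φ l y') (φy l y) y)
    (hφy_pos : ∀ l : ℝ, 0 < l → ∀ y : ℝ, 0 < φy l y)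
    (hφl : ∀ l : ℝ, 0 < l → ∀ y : ℝ, HasDerivAt (fun l' => φ l' y) (φl l y) l)
    {l₁ : ℝ} (h1 : 0 < l₁) (hmid : ∀ l' ∈ Ici l₁, Mid φ x l') {l : ℝ} (hl : l ∈ Ici l₁) :
    ContinuousWithinAt (yf φ x) (Ici l₁) l := by
  have hl0 : 0 < l := lt_of_lt_of_le h1 hl
  have hsm := strictMono_slice hφy hφy_pos hl0
  have hspec := yf_spec hφy hφy_pos (hmid l hl)
  set yl := yf φ x l with hyl
  rw [ContinuousWithinAt, Metric.tendsto_nhds]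
  intro ε hε
  have hup : ∀ᶠ l' in 𝓝 l, x < φ l' (yl + ε/2) := by
    have hv : x < φ l (yl + ε/2) := by
      conv_lhs => rw [← hspec.1]
      exact hsm (by linarith)
    exact (contAt_l hφl hl0 (yl + ε/2)).eventually (eventually_gt_nhds hv)
  have hdown : ∀ᶠ l' in 𝓝 l, φ l' (yl - ε/2) < x := by
    have hv : φ l (yl - ε/2) < x := by
      conv_rhs => rw [← hspec.1]
      exact hsm (by linarith)
    exact (contAt_l hφl hl0 (yl - ε/2)).eventually (eventually_lt_nhds hv)
  filter_upwards [hup.filter_mono nhdsWithin_le_nhds, hdown.filter_mono nhdsWithin_le_nhds,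
    eventually_mem_nhdsWithin] with l' hu' hd' hmem'
  have hspec' := yf_spec hφy hφy_pos (hmid l' hmem')
  have hle : yf φ x l' ≤ yl + ε/2 := (hspec'.2 _).1 hu'.le
  have hgt : yl - ε/2 < yf φ x l' := by
    by_contra hcon
    push_neg at hcon
    exact absurd ((hspec'.2 _).2 hcon) (not_le.2 hd')
  rw [Real.dist_eq, abs_sub_lt_iff]
  constructor <;> linarith

theorem yf_hasDeriv
    (hφy : ∀ l : ℝ, 0 < l → ∀ y : ℝ, HasDerivAt (fun y' => φ l y') (φy l y) y)
    (hφy_pos : ∀ l : ℝ, 0 < l → ∀ y : ℝ, 0 < φy l y)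
    (hφl : ∀ l : ℝ, 0 < l → ∀ y : ℝ, HasDerivAt (fun l' => φ l' y) (φl l y) l)
    (hφy_cont : ContinuousOn (fun p : ℝ × ℝ => φy p.1 p.2) (Set.Ioi 0 ×ˢ Set.univ))
    (hφl_cont : ContinuousOn (fun p : ℝ × ℝ => φl p.1 p.2) (Set.Ioi 0 ×ˢ Set.univ))
    {l₁ : ℝ} (h1 : 0 < l₁) (hmid : ∀ l' ∈ Ici l₁, Mid φ x l') {l : ℝ} (hl : l₁ < l) :
    HasDerivAt (yf φ x) (-(φl l (yf φ x l) / φy l (yf φ x l))) l := by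
  have hl0 : 0 < l := h1.trans hl
  set yl := yf φ x l with hyl
  have hspec := yf_spec hφy hφy_pos (hmid l (le_of_lt hl))
  have hcy : ContinuousAt (yf φ x) l :=
    (yf_contWithin hφy hφy_pos hφl h1 hmid (le_of_lt hl)).continuousAt (Ici_mem_nhds hl)
  have hopen : IsOpen ((Set.Ioi (0:ℝ)) ×ˢ (Set.univ : Set ℝ)) := isOpen_Ioi.prod isOpen_univ
  have hmemp : ((l, yl) : ℝ × ℝ) ∈ (Set.Ioi (0:ℝ)) ×ˢ (Set.univ : Set ℝ) :=
    ⟨mem_Ioi.2 hl0, mem_univ _⟩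
  have hlc : ContinuousAt (fun p : ℝ × ℝ => φl p.1 p.2) (l, yl) :=
    hφl_cont.continuousAt (hopen.mem_nhds hmemp)
  have hyc : ContinuousAt (fun p : ℝ × ℝ => φy p.1 p.2) (l, yl) :=
    hφy_cont.continuousAt (hopen.mem_nhds hmemp)
  have hφy0 : φy l yl ≠ 0 := ne_of_gt (hφy_pos l hl0 yl)
  rw [hasDerivAt_iff_tendsto_slope, Metric.tendsto_nhds]
  intro ε hε
  have hF : ContinuousAt (fun p : ℝ × ℝ => -(p.1 / p.2)) (φl l yl, φy l yl) :=
    (continuousAt_fst.div continuousAt_snd (by simpa)).neg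
  obtain ⟨δ1, hδ1, hF1⟩ := Metric.continuousAt_iff.1 hF ε hε
  obtain ⟨δ2, hδ2, h2⟩ := Metric.continuousAt_iff.1 hlc δ1 hδ1
  obtain ⟨δ3, hδ3, h3⟩ := Metric.continuousAt_iff.1 hyc δ1 hδ1
  have hballs : ∀ᶠ l' in 𝓝 l, |l' - l| < min δ2 δ3 ∧ l₁ < l' := by
    have hb : ∀ᶠ l' in 𝓝 l, |l' - l| < min δ2 δ3 := by
      have := Metric.ball_mem_nhds l (lt_min hδ2 hδ3)
      filter_upwards [this] with a ha
      simpa [Real.dist_eq] using ha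
    exact hb.and (eventually_gt_nhds hl)
  have hyev : ∀ᶠ l' in 𝓝 l, |yf φ x l' - yl| < min δ2 δ3 := by
    have := hcy.eventually (eventually_abs_sub_lt (yf φ x l) (lt_min hδ2 hδ3))
    simpa [hyl] using this
  filter_upwards [hballs.filter_mono nhdsWithin_le_nhds, hyev.filter_mono nhdsWithin_le_nhds,
    eventually_mem_nhdsWithin] with l' hball hyev' hne'
  obtain ⟨hdist, hl1'⟩ := hball
  have hne : l' ≠ l := hne'
  have hl'0 : 0 < l' := h1.trans hl1'
  have hspec' := yf_spec hφy hφy_pos (hmid l' (le_of_lt hl1'))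
  -- MVT in the l-direction
  have hζ : ∃ ζ : ℝ, |ζ - l| ≤ |l' - l| ∧ 0 < ζ ∧
      φ l' yl - φ l yl = φl ζ yl * (l' - l) := by
    rcases lt_or_gt_of_ne hne with hlt | hgt
    · -- l' < l
      have hpos : ∀ t ∈ Icc l' l, (0:ℝ) < t := fun t ht => lt_of_lt_of_le hl'0 ht.1
      have hcont : ContinuousOn (fun t => φ t yl) (Icc l' l) := fun t ht =>
        ((hφl t (hpos t ht) yl).differentiableAt.continuousAt).continuousWithinAt
      obtain ⟨ζ, hζI, hζeq⟩ := exists_hasDerivAt_eq_slope (fun t => φ t yl) (fun t => φl t yl)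
        hlt hcont (fun t ht => hφl t (hpos t (mem_Icc_of_Ioo ht)) yl)
      replace hζeq : φl ζ yl = (φ l yl - φ l' yl) / (l - l') := hζeq
      have hne2 : l - l' ≠ 0 := by intro h; apply hne; linarith
      rw [eq_div_iff hne2] at hζeq
      refine ⟨ζ, ?_, hpos ζ (mem_Icc_of_Ioo hζI), by linear_combination hζeq⟩
      rw [abs_of_neg (by linarith [hζI.2] : ζ - l < 0), abs_of_neg (by linarith : l' - l < 0)]
      linarith [hζI.1]
    · -- l < l'
      have hpos : ∀ t ∈ Icc l l', (0:ℝ) < t := fun t ht => lt_of_lt_of_le hl0 ht.1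
      have hcont : ContinuousOn (fun t => φ t yl) (Icc l l') := fun t ht =>
        ((hφl t (hpos t ht) yl).differentiableAt.continuousAt).continuousWithinAt
      obtain ⟨ζ, hζI, hζeq⟩ := exists_hasDerivAt_eq_slope (fun t => φ t yl) (fun t => φl t yl)
        hgt hcont (fun t ht => hφl t (hpos t (mem_Icc_of_Ioo ht)) yl)
      replace hζeq : φl ζ yl = (φ l' yl - φ l yl) / (l' - l) := hζeq
      have hne2 : l' - l ≠ 0 := by intro h; apply hne; linarith
      rw [eq_div_iff hne2] at hζeq
      refine ⟨ζ, ?_, hpos ζ (mem_Icc_of_Ioo hζI), by linear_combination -hζeq⟩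
      rw [abs_of_pos (by linarith [hζI.1] : (0:ℝ) < ζ - l), abs_of_pos (by linarith : (0:ℝ) < l' - l)]
      linarith [hζI.2]
  -- MVT in the y-direction
  have hξ : ∃ ξ : ℝ, |ξ - yl| ≤ |yf φ x l' - yl| ∧
      φ l' (yf φ x l') - φ l' yl = φy l' ξ * (yf φ x l' - yl) := by
    rcases lt_trichotomy (yf φ x l') yl with hlt | heq | hgt
    · have hcont : ContinuousOn (fun t => φ l' t) (Icc (yf φ x l') yl) := fun t _ =>
        ((hφy l' hl'0 t).differentiableAt.continuousAt).continuousWithinAt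
      obtain ⟨ξ, hξI, hξeq⟩ := exists_hasDerivAt_eq_slope (fun t => φ l' t) (fun t => φy l' t)
        hlt hcont (fun t _ => hφy l' hl'0 t)
      replace hξeq : φy l' ξ = (φ l' yl - φ l' (yf φ x l')) / (yl - yf φ x l') := hξeq
      have hne2 : yl - yf φ x l' ≠ 0 := by intro h; linarith
      rw [eq_div_iff hne2] at hξeq
      refine ⟨ξ, ?_, by linear_combination hξeq⟩
      rw [abs_of_neg (by linarith [hξI.2] : ξ - yl < 0),
        abs_of_neg (by linarith : yf φ x l' - yl < 0)]
      linarith [hξI.1]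
    · exact ⟨yl, by simp [heq], by rw [heq]; ring⟩
    · have hcont : ContinuousOn (fun t => φ l' t) (Icc yl (yf φ x l')) := fun t _ =>
        ((hφy l' hl'0 t).differentiableAt.continuousAt).continuousWithinAt
      obtain ⟨ξ, hξI, hξeq⟩ := exists_hasDerivAt_eq_slope (fun t => φ l' t) (fun t => φy l' t)
        hgt hcont (fun t _ => hφy l' hl'0 t)
      replace hξeq : φy l' ξ = (φ l' (yf φ x l') - φ l' yl) / (yf φ x l' - yl) := hξeq
      have hne2 : yf φ x l' - yl ≠ 0 := by intro h; linarith
      rw [eq_div_iff hne2] at hξeq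
      refine ⟨ξ, ?_, by linear_combination -hξeq⟩
      rw [abs_of_pos (by linarith [hξI.1] : (0:ℝ) < ξ - yl),
        abs_of_pos (by linarith : (0:ℝ) < yf φ x l' - yl)]
      linarith [hξI.2]
  obtain ⟨ζ, hζd, hζ0, hζeq⟩ := hζ
  obtain ⟨ξ, hξd, hξeq⟩ := hξ
  have hsum : φl ζ yl * (l' - l) + φy l' ξ * (yf φ x l' - yl) = 0 := by
    have e1 : φ l' (yf φ x l') = x := hspec'.1
    have e2 : φ l yl = x := hspec.1
    linear_combination e1 - e2 - hζeq - hξeq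
  have hφyξ : 0 < φy l' ξ := hφy_pos l' hl'0 ξ
  have hslope : slope (yf φ x) l l' = -(φl ζ yl / φy l' ξ) := by
    have hlne : l' - l ≠ 0 := sub_ne_zero.2 hne
    have h9 : φy l' ξ * (yf φ x l' - yl) = -(φl ζ yl * (l' - l)) := by linarith
    rw [slope_def_field, div_eq_iff hlne]
    field_simp
    linear_combination h9
  rw [hslope]
  have hpair : dist ((φl ζ yl, φy l' ξ) : ℝ × ℝ) (φl l yl, φy l yl) < δ1 := by
    rw [Prod.dist_eq]
    have d1 : dist (φl ζ yl) (φl l yl) < δ1 := by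
      have : dist ((ζ, yl) : ℝ × ℝ) (l, yl) < δ2 := by
        rw [Prod.dist_eq]
        simp only [Real.dist_eq, sub_self, abs_zero]
        exact max_lt (lt_of_le_of_lt hζd (lt_of_lt_of_le hdist (min_le_left _ _))) hδ2
      exact h2 this
    have d2 : dist (φy l' ξ) (φy l yl) < δ1 := by
      have : dist ((l', ξ) : ℝ × ℝ) (l, yl) < δ3 := by
        rw [Prod.dist_eq]
        refine max_lt ?_ ?_
        · rw [Real.dist_eq]; exact lt_of_lt_of_le hdist (min_le_right _ _)
        · rw [Real.dist_eq]
          exact lt_of_le_of_lt hξd (lt_of_lt_of_le hyev' (min_le_right _ _))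
      exact h3 this
    exact max_lt d1 d2
  exact hF1 hpair



variable {Ω : Type*} [MeasurableSpace Ω] {P : Measure Ω} [IsProbabilityMeasure P]
  {Y : Ω → ℝ} {φ φl φy : ℝ → ℝ → ℝ} {x : ℝ}

/-- Lipschitz bound for `l ↦ φ l (Y ω)` on a ball inside `(0, η]`. -/
theorem lip_phi (hφl : ∀ l : ℝ, 0 < l → ∀ y : ℝ, HasDerivAt (fun l' => φ l' y) (φl l y) l)
    {η : ℝ} {g : Ω → ℝ} (hg : ∀ ω : Ω, ∀ l ∈ Set.Ioc (0:ℝ) η, |φl l (Y ω)| ≤ g ω)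
    {l ε : ℝ} (hball : Metric.ball l ε ⊆ Set.Ioc (0:ℝ) η) (ω : Ω) :
    LipschitzOnWith (Real.nnabs (g ω)) (fun l' => φ l' (Y ω)) (Metric.ball l ε) := by
  apply (convex_ball l ε).lipschitzOnWith_of_nnnorm_hasDerivWithin_le
    (f' := fun l' => φl l' (Y ω))
    (fun z hz => (hφl z (hball hz).1 (Y ω)).hasDerivWithinAt)
  intro z hz
  have := hg ω z (hball hz)
  rw [← NNReal.coe_le_coe]
  simpa [Real.norm_eq_abs] using le_trans this (le_abs_self (g ω))

theorem lip_max (hφl : ∀ l : ℝ, 0 < l → ∀ y : ℝ, HasDerivAt (fun l' => φ l' y) (φl l y) l)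
    {η : ℝ} {g : Ω → ℝ} (hg : ∀ ω : Ω, ∀ l ∈ Set.Ioc (0:ℝ) η, |φl l (Y ω)| ≤ g ω)
    {l ε : ℝ} (hball : Metric.ball l ε ⊆ Set.Ioc (0:ℝ) η) (ω : Ω) :
    LipschitzOnWith (Real.nnabs (g ω)) (fun l' => max (φ l' (Y ω) - x) 0) (Metric.ball l ε) := by
  have h1 := lip_phi (Y := Y) hφl hg hball ω
  intro a ha b hb
  have h2 := h1 ha hb
  refine le_trans ?_ h2
  rw [edist_dist, edist_dist]
  apply ENNReal.ofReal_le_ofReal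
  rw [Real.dist_eq, Real.dist_eq]
  have := abs_max_sub_max_le_abs (φ a (Y ω) - x) (φ b (Y ω) - x) 0
  simpa using this

/-- Measurability of the slices. -/
theorem meas_phi (hφy : ∀ l : ℝ, 0 < l → ∀ y : ℝ, HasDerivAt (fun y' => φ l y') (φy l y) y)
    (hYmeas : Measurable Y) {l : ℝ} (hl : 0 < l) :
    Measurable (fun ω => φ l (Y ω)) := by
  have : Continuous (φ l) :=
    (Differentiable.continuous (fun y => (hφy l hl y).differentiableAt))
  exact this.measurable.comp hYmeas

theorem meas_phil (hφl_cont : ContinuousOn (fun p : ℝ × ℝ => φl p.1 p.2) (Set.Ioi 0 ×ˢ Set.univ))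
    (hYmeas : Measurable Y) {l : ℝ} (hl : 0 < l) :
    Measurable (fun ω => φl l (Y ω)) := by
  have hc : Continuous (fun y => φl l y) := by
    rw [← continuousOn_univ]
    have : ContinuousOn ((fun p : ℝ × ℝ => φl p.1 p.2) ∘ (fun y => (l, y))) univ := by
      apply hφl_cont.comp (by fun_prop)
      intro y _
      exact ⟨mem_Ioi.2 hl, mem_univ _⟩
    exact this
  exact hc.measurable.comp hYmeas

/-- Derivative of `l ↦ E[φ l (Y)]`; centeredness gives `E[φl l Y] = 0`. -/
theorem integral_phil_eq_zero
    (hφy : ∀ l : ℝ, 0 < l → ∀ y : ℝ, HasDerivAt (fun y' => φ l y') (φy l y) y)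
    (hφl : ∀ l : ℝ, 0 < l → ∀ y : ℝ, HasDerivAt (fun l' => φ l' y) (φl l y) l)
    (hφl_cont : ContinuousOn (fun p : ℝ × ℝ => φl p.1 p.2) (Set.Ioi 0 ×ˢ Set.univ))
    (hYmeas : Measurable Y)
    (hint : ∀ η : ℝ, 0 < η → Integrable (fun ω => φ η (Y ω)) P)
    (hdom : ∀ η : ℝ, 0 < η → ∃ g : Ω → ℝ, Integrable g P ∧
      ∀ ω : Ω, ∀ l ∈ Set.Ioc (0:ℝ) η, |φl l (Y ω)| ≤ g ω)
    (hcentered : ∀ l : ℝ, 0 ≤ l → (∫ ω, φ l (Y ω) ∂P) = 0)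
    {l : ℝ} (hl : 0 < l) : (∫ ω, φl l (Y ω) ∂P) = 0 := by
  obtain ⟨g, hgint, hg⟩ := hdom (l + 1) (by linarith)
  set ε := min l 1 with hε
  have hεpos : 0 < ε := lt_min hl one_pos
  have hball : Metric.ball l ε ⊆ Set.Ioc (0:ℝ) (l + 1) := by
    intro z hz
    rw [Metric.mem_ball, Real.dist_eq, abs_sub_lt_iff] at hz
    have h1 := min_le_left l 1
    have h2 := min_le_right l 1
    exact ⟨by linarith [hz.1, hz.2], by linarith [hz.1, hz.2]⟩
  have key := hasDerivAt_integral_of_dominated_loc_of_lip (μ := P)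
    (F := fun l' ω => φ l' (Y ω)) (F' := fun ω => φl l (Y ω)) (x₀ := l)
    (bound := g) (Metric.ball_mem_nhds l hεpos) ?_ (hint l hl) ?_ ?_ hgint ?_
  · have hconst : (fun l' => ∫ ω, φ l' (Y ω) ∂P) =ᶠ[𝓝 l] (fun _ => (0:ℝ)) := by
      filter_upwards [Metric.ball_mem_nhds l hεpos] with l' hl'
      exact hcentered l' (le_of_lt (hball hl').1)
    have h0 : HasDerivAt (fun _ : ℝ => (0:ℝ)) (∫ ω, φl l (Y ω) ∂P) l :=
      key.2.congr_of_eventuallyEq hconst.symm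
    have := h0.unique (hasDerivAt_const l 0)
    linarith [this]
  · filter_upwards [Metric.ball_mem_nhds l hεpos] with l' hl'
    exact (meas_phi hφy hYmeas (hball hl').1).aestronglyMeasurable
  · exact (meas_phil hφl_cont hYmeas hl).aestronglyMeasurable
  · exact Eventually.of_forall (lip_phi hφl hg hball)
  · exact Eventually.of_forall (fun ω => hφl l hl (Y ω))


theorem A_hasDeriv
    (hφy : ∀ l : ℝ, 0 < l → ∀ y : ℝ, HasDerivAt (fun y' => φ l y') (φy l y) y)
    (hφl : ∀ l : ℝ, 0 < l → ∀ y : ℝ, HasDerivAt (fun l' => φ l' y) (φl l y) l)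
    (hφl_cont : ContinuousOn (fun p : ℝ × ℝ => φl p.1 p.2) (Set.Ioi 0 ×ˢ Set.univ))
    (hYmeas : Measurable Y)
    (hint : ∀ η : ℝ, 0 < η → Integrable (fun ω => φ η (Y ω)) P)
    (hdom : ∀ η : ℝ, 0 < η → ∃ g : Ω → ℝ, Integrable g P ∧
      ∀ ω : Ω, ∀ l ∈ Set.Ioc (0:ℝ) η, |φl l (Y ω)| ≤ g ω)
    {l : ℝ} (hl : 0 < l) (hP0 : P {ω | φ l (Y ω) = x} = 0) :
    Integrable (fun ω => if x ≤ φ l (Y ω) then φl l (Y ω) else 0) P ∧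
    HasDerivAt (fun l' => ∫ ω, max (φ l' (Y ω) - x) 0 ∂P)
      (∫ ω, (if x ≤ φ l (Y ω) then φl l (Y ω) else 0) ∂P) l := by
  obtain ⟨g, hgint, hg⟩ := hdom (l + 1) (by linarith)
  set ε := min l 1 with hε
  have hεpos : 0 < ε := lt_min hl one_pos
  have hball : Metric.ball l ε ⊆ Set.Ioc (0:ℝ) (l + 1) := by
    intro z hz
    rw [Metric.mem_ball, Real.dist_eq, abs_sub_lt_iff] at hz
    have h1 := min_le_left l 1
    have h2 := min_le_right l 1
    exact ⟨by linarith [hz.1, hz.2], by linarith [hz.1, hz.2]⟩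
  have hmeasset : MeasurableSet {ω | x ≤ φ l (Y ω)} :=
    measurableSet_le measurable_const (meas_phi hφy hYmeas hl)
  exact hasDerivAt_integral_of_dominated_loc_of_lip (μ := P)
    (F := fun l' ω => max (φ l' (Y ω) - x) 0)
    (F' := fun ω => if x ≤ φ l (Y ω) then φl l (Y ω) else 0) (x₀ := l)
    (bound := g) (Metric.ball_mem_nhds l hεpos)
    (by
      filter_upwards [Metric.ball_mem_nhds l hεpos] with l' hl'
      have hm := meas_phi hφy hYmeas (hball hl').1
      exact ((hm.sub measurable_const).max measurable_const).aestronglyMeasurable)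
    (by
      have h := ((hint l hl).sub (integrable_const x)).pos_part
      exact h.congr (Eventually.of_forall fun ω => rfl))
    ((Measurable.ite hmeasset (meas_phil hφl_cont hYmeas hl)
      measurable_const).aestronglyMeasurable)
    (Eventually.of_forall (lip_max hφl hg hball))
    hgint
    (by
      have hae : ∀ᵐ ω ∂P, φ l (Y ω) ≠ x := by
        rw [ae_iff]
        convert hP0 using 2
        ext ω; simp [not_not]
      filter_upwards [hae] with ω hω
      rcases lt_or_gt_of_ne hω with hlt | hgt
      · have hev : ∀ᶠ l' in 𝓝 l, φ l' (Y ω) < x :=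
          ((hφl l hl (Y ω)).differentiableAt.continuousAt).eventually (eventually_lt_nhds hlt)
        have h0 : HasDerivAt (fun _ : ℝ => (0:ℝ))
            (if x ≤ φ l (Y ω) then φl l (Y ω) else 0) l := by
          rw [if_neg (not_le.2 hlt)]; exact hasDerivAt_const l 0
        apply h0.congr_of_eventuallyEq
        filter_upwards [hev] with l' hl'
        rw [max_eq_right (by linarith)]
      · have hev : ∀ᶠ l' in 𝓝 l, x < φ l' (Y ω) :=
          ((hφl l hl (Y ω)).differentiableAt.continuousAt).eventually (eventually_gt_nhds hgt)
        have h0 : HasDerivAt (fun l' => φ l' (Y ω) - x)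
            (if x ≤ φ l (Y ω) then φl l (Y ω) else 0) l := by
          rw [if_pos hgt.le]; exact (hφl l hl (Y ω)).sub_const x
        apply h0.congr_of_eventuallyEq
        filter_upwards [hev] with l' hl'
        rw [max_eq_left (by linarith)])


theorem S_cont (hf_cont : Continuous f) (hf_int : Integrable f) :
    Continuous (S f) :=
  continuous_iff_continuousAt.2 fun z =>
    (S_hasDerivAt hf_cont hf_int z).differentiableAt.continuousAt



variable {Ω : Type*} [MeasurableSpace Ω] {P : Measure Ω} [IsProbabilityMeasure P]
  {Y : Ω → ℝ} {f : ℝ → ℝ} {φ φl φy : ℝ → ℝ → ℝ} {x : ℝ}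


theorem cont_sliceY (hcont : ContinuousOn (fun p : ℝ × ℝ => φy p.1 p.2) (Set.Ioi 0 ×ˢ Set.univ))
    {l : ℝ} (hl : 0 < l) : Continuous (fun y => φy l y) := by
  rw [← continuousOn_univ]
  have : ContinuousOn ((fun p : ℝ × ℝ => φy p.1 p.2) ∘ (fun y => (l, y))) univ := by
    apply hcont.comp (by fun_prop)
    intro y _
    exact ⟨mem_Ioi.2 hl, mem_univ _⟩
  exact this

/-- The key inequality: `A' * S(y_l) - A * f(y_l) * r₀ ≥ 0`. -/
theorem key_ineq
    (hYmeas : Measurable Y)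
    (hf_pos : ∀ x, 0 < f x) (hf_cont : Continuous f)
    (hf_density : ∀ s : Set ℝ, MeasurableSet s →
      P (Y ⁻¹' s) = ENNReal.ofReal (∫ u in s, f u))
    (hsurv : ConcaveOn ℝ Set.univ (fun z => Real.log (S f z)))
    (hφy : ∀ l : ℝ, 0 < l → ∀ y : ℝ, HasDerivAt (fun y' => φ l y') (φy l y) y)
    (hφl : ∀ l : ℝ, 0 < l → ∀ y : ℝ, HasDerivAt (fun l' => φ l' y) (φl l y) l)
    (hφy_cont : ContinuousOn (fun p : ℝ × ℝ => φy p.1 p.2) (Set.Ioi 0 ×ˢ Set.univ))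
    (hφl_cont : ContinuousOn (fun p : ℝ × ℝ => φl p.1 p.2) (Set.Ioi 0 ×ˢ Set.univ))
    (hφy_pos : ∀ l : ℝ, 0 < l → ∀ y : ℝ, 0 < φy l y)
    (hratio : ∀ l : ℝ, 0 < l → Monotone (fun y => φl l y / φy l y))
    (hint : ∀ η : ℝ, 0 < η → Integrable (fun ω => φ η (Y ω)) P)
    (hdom : ∀ η : ℝ, 0 < η → ∃ g : Ω → ℝ, Integrable g P ∧
      ∀ ω : Ω, ∀ l ∈ Set.Ioc (0:ℝ) η, |φl l (Y ω)| ≤ g ω)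
    (hcentered : ∀ l : ℝ, 0 ≤ l → (∫ ω, φ l (Y ω) ∂P) = 0)
    {l : ℝ} (hl : 0 < l) (hm : Mid φ x l) :
    0 ≤ (∫ ω, (if x ≤ φ l (Y ω) then φl l (Y ω) else 0) ∂P) * S f (yf φ x l)
      - (∫ ω, max (φ l (Y ω) - x) 0 ∂P) * f (yf φ x l)
        * (φl l (yf φ x l) / φy l (yf φ x l)) := by
  obtain ⟨g, hgint, hg⟩ := hdom (l + 1) (by linarith)
  have hf_int : Integrable f := f_integrable hYmeas hf_density
  set yl := yf φ x l with hyl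
  set r₀ := φl l yl / φy l yl with hr₀
  have hspec := yf_spec hφy hφy_pos hm
  have hiff := hspec.2
  have hmeasset : MeasurableSet {ω | x ≤ φ l (Y ω)} :=
    measurableSet_le measurable_const (meas_phi hφy hYmeas hl)
  have hφymeas : Measurable (fun ω => φy l (Y ω)) :=
    ((cont_sliceY hφy_cont hl).measurable).comp hYmeas
  have hφlmeas : Measurable (fun ω => φl l (Y ω)) :=
    ((cont_sliceY hφl_cont hl).measurable).comp hYmeas
  have hgabs : ∀ ω, |φl l (Y ω)| ≤ g ω := fun ω => hg ω l ⟨hl, by linarith⟩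
  have hiteint : Integrable (fun ω => if x ≤ φ l (Y ω) then φl l (Y ω) else 0) P := by
    apply Integrable.mono' hgint
      ((hφlmeas.ite hmeasset measurable_const).aestronglyMeasurable)
    refine Eventually.of_forall fun ω => ?_
    rw [Real.norm_eq_abs]
    by_cases h : x ≤ φ l (Y ω)
    · simpa [h] using hgabs ω
    · simp only [h, if_false, abs_zero]
      exact le_trans (abs_nonneg _) (hgabs ω)
  set A := ∫ ω, max (φ l (Y ω) - x) 0 ∂P with hA
  set A' := ∫ ω, (if x ≤ φ l (Y ω) then φl l (Y ω) else 0) ∂P with hA'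
  have hA_nonneg : 0 ≤ A :=
    integral_nonneg fun ω => le_max_right _ _
  have hSpos := S_pos hf_pos hf_cont hf_int yl
  have hfpos := hf_pos yl
  rcases le_or_gt r₀ 0 with hr | hr
  · -- r₀ ≤ 0 : A' ≥ 0 suffices
    have hzero := integral_phil_eq_zero hφy hφl hφl_cont hYmeas hint hdom hcentered hl
    have hcompint : Integrable (fun ω => if x ≤ φ l (Y ω) then 0 else φl l (Y ω)) P := by
      apply Integrable.mono' hgint
        ((measurable_const.ite hmeasset hφlmeas).aestronglyMeasurable)
      refine Eventually.of_forall fun ω => ?_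
      rw [Real.norm_eq_abs]
      by_cases h : x ≤ φ l (Y ω)
      · simp only [h, if_true, abs_zero]
        exact le_trans (abs_nonneg _) (hgabs ω)
      · simpa [h] using hgabs ω
    have hsplit : A' + (∫ ω, (if x ≤ φ l (Y ω) then 0 else φl l (Y ω)) ∂P)
        = ∫ ω, φl l (Y ω) ∂P := by
      rw [hA', ← integral_add hiteint hcompint]
      congr 1; ext ω
      by_cases h : x ≤ φ l (Y ω) <;> simp [h]
    have hcomp_nonpos : (∫ ω, (if x ≤ φ l (Y ω) then 0 else φl l (Y ω)) ∂P) ≤ 0 := by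
      apply integral_nonpos
      intro ω
      simp only [Pi.zero_apply]
      by_cases h : x ≤ φ l (Y ω)
      · simp [h]
      · simp only [h, if_false]
        have hY : ¬ (yl ≤ Y ω) := fun hc => h ((hiff (Y ω)).2 hc)
        push_neg at hY
        have hrmono := hratio l hl (le_of_lt hY)
        have hφyY := hφy_pos l hl (Y ω)
        have : φl l (Y ω) / φy l (Y ω) ≤ r₀ := hrmono
        have h2 : φl l (Y ω) ≤ r₀ * φy l (Y ω) := by
          rw [div_le_iff₀ hφyY] at this; linarith
        nlinarith [mul_nonneg (neg_nonneg.2 hr) hφyY.le]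
    have hA'_nonneg : 0 ≤ A' := by
      rw [hzero] at hsplit; linarith
    nlinarith [mul_nonneg hA'_nonneg hSpos.le,
      mul_nonneg (mul_nonneg hA_nonneg hfpos.le) (neg_nonneg.2 hr)]
  · -- r₀ > 0
    have hφycont : Continuous (fun u => φy l u) := cont_sliceY hφy_cont hl
    -- Step 1 : A' ≥ r₀ * B
    have hpoint : ∀ ω, r₀ * (if x ≤ φ l (Y ω) then φy l (Y ω) else 0)
        ≤ (if x ≤ φ l (Y ω) then φl l (Y ω) else 0) := by
      intro ω
      by_cases h : x ≤ φ l (Y ω)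
      · simp only [h, if_true]
        have hY : yl ≤ Y ω := (hiff (Y ω)).1 h
        have hrmono := hratio l hl hY
        have hφyY := hφy_pos l hl (Y ω)
        have : r₀ ≤ φl l (Y ω) / φy l (Y ω) := hrmono
        rw [le_div_iff₀ hφyY] at this
        linarith
      · simp [h]
    have hφyiteint : Integrable (fun ω => if x ≤ φ l (Y ω) then φy l (Y ω) else 0) P := by
      apply Integrable.mono' (hiteint.const_mul (1/r₀))
        ((hφymeas.ite hmeasset measurable_const).aestronglyMeasurable)
      refine Eventually.of_forall fun ω => ?_
      rw [Real.norm_eq_abs]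
      by_cases h : x ≤ φ l (Y ω)
      · simp only [h, if_true]
        rw [abs_of_nonneg (hφy_pos l hl (Y ω)).le]
        have hpt := hpoint ω
        simp only [h, if_true] at hpt
        rw [one_div, ← div_eq_inv_mul, le_div_iff₀ hr]
        nlinarith
      · simp [h]
    set B := ∫ ω, (if x ≤ φ l (Y ω) then φy l (Y ω) else 0) ∂P with hB
    have hB_nonneg : 0 ≤ B := integral_nonneg fun ω => by
      by_cases h : x ≤ φ l (Y ω) <;> simp [h, (hφy_pos l hl (Y ω)).le]
    have hstep1 : r₀ * B ≤ A' := by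
      have h1 := integral_smul (μ := P) r₀ (fun ω => if x ≤ φ l (Y ω) then φy l (Y ω) else 0)
      simp only [smul_eq_mul] at h1
      rw [hB, ← h1]
      exact integral_mono (hφyiteint.const_mul r₀) hiteint hpoint
    -- Step 2 : f yl * A ≤ S f yl * B  via Tonelli + hazard
    have hAint : Integrable (fun ω => max (φ l (Y ω) - x) 0) P := by
      have h := ((hint l hl).sub (integrable_const x)).pos_part
      exact h.congr (Eventually.of_forall fun ω => rfl)
    set c : ℝ → ENNReal := fun u => ENNReal.ofReal (φy l u) with hc
    have hcmeas : Measurable c := ENNReal.measurable_ofReal.comp hφycont.measurable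
    set K : Ω → ℝ → ENNReal := fun ω u => if yl < u ∧ u ≤ Y ω then c u else 0 with hK
    have hKmeas : Measurable (Function.uncurry K) := by
      apply Measurable.ite
      · exact ((measurableSet_lt measurable_const measurable_snd).inter
          (measurableSet_le measurable_snd (hYmeas.comp measurable_fst)))
      · exact hcmeas.comp measurable_snd
      · exact measurable_const
    have hAof : ENNReal.ofReal A = ∫⁻ u in Ioi yl, c u * ENNReal.ofReal (S f u) := by
      rw [hA, ofReal_integral_eq_lintegral_ofReal hAint
        (Eventually.of_forall fun ω => le_max_right _ _)]
      have hpt : ∀ ω, ENNReal.ofReal (max (φ l (Y ω) - x) 0) = ∫⁻ u, K ω u := by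
        intro ω
        by_cases hcase : yl ≤ Y ω
        · have hxφ : x ≤ φ l (Y ω) := (hiff (Y ω)).2 hcase
          have hftc : ∫ t in yl..(Y ω), φy l t = φ l (Y ω) - φ l yl := by
            apply intervalIntegral.integral_eq_sub_of_hasDerivAt
              (fun t _ => hφy l hl t)
            exact (hφycont.intervalIntegrable _ _)
          have hmax : max (φ l (Y ω) - x) 0 = φ l (Y ω) - x := max_eq_left (by linarith)
          have hKind : ∀ u, K ω u = (Ioc yl (Y ω)).indicator c u := by
            intro u
            simp only [hK, Set.indicator_apply, mem_Ioc]
          rw [hmax]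
          calc ENNReal.ofReal (φ l (Y ω) - x)
              = ENNReal.ofReal (∫ t in Ioc yl (Y ω), φy l t) := by
                rw [← intervalIntegral.integral_of_le hcase, hftc]
                congr 1
                have := hspec.1
                rw [← hyl] at this
                linarith
            _ = ∫⁻ t in Ioc yl (Y ω), ENNReal.ofReal (φy l t) := by
                rw [ofReal_integral_eq_lintegral_ofReal
                  (hφycont.integrableOn_Ioc)
                  (Eventually.of_forall fun u => (hφy_pos l hl u).le)]
            _ = ∫⁻ u, (Ioc yl (Y ω)).indicator c u := by
                rw [lintegral_indicator measurableSet_Ioc]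
            _ = ∫⁻ u, K ω u := by
                congr 1; ext u; rw [hKind u]
        · push_neg at hcase
          have hxφ : ¬ (x ≤ φ l (Y ω)) := fun hc => absurd ((hiff (Y ω)).1 hc) (not_le.2 hcase)
          push_neg at hxφ
          have hmax : max (φ l (Y ω) - x) 0 = 0 := max_eq_right (by linarith)
          have hK0 : ∀ u, K ω u = 0 := by
            intro u
            simp only [hK, ite_eq_right_iff]
            rintro ⟨h1, h2⟩
            exact absurd (lt_of_lt_of_le h1 h2) (not_lt.2 hcase.le)
          rw [hmax]
          simp only [ENNReal.ofReal_zero]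
          rw [lintegral_congr hK0, lintegral_zero]
      rw [lintegral_congr hpt]
      rw [lintegral_lintegral_swap hKmeas.aemeasurable]
      have hinner : ∀ u, ∫⁻ ω, K ω u ∂P =
          (Ioi yl).indicator (fun u => c u * ENNReal.ofReal (S f u)) u := by
        intro u
        by_cases hu : yl < u
        · have : ∀ ω, K ω u = ({ω | u ≤ Y ω}).indicator (fun _ => c u) ω := by
            intro ω
            simp only [hK, Set.indicator_apply, mem_setOf_eq, hu, true_and]
          rw [lintegral_congr this, lintegral_indicator_const
            (measurableSet_le measurable_const hYmeas)]
          have hset : {ω | u ≤ Y ω} = Y ⁻¹' (Ici u) := rfl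
          rw [hset, hf_density _ measurableSet_Ici]
          rw [Set.indicator_of_mem (mem_Ioi.2 hu)]
          rfl
        · have : ∀ ω, K ω u = 0 := by
            intro ω
            simp only [hK, ite_eq_right_iff]
            rintro ⟨h1, _⟩
            exact absurd h1 hu
          rw [lintegral_congr this, lintegral_zero,
            Set.indicator_of_notMem (by simpa using hu)]
      rw [lintegral_congr hinner, lintegral_indicator measurableSet_Ioi]
    have hBof : ENNReal.ofReal B = ∫⁻ u in Ioi yl, c u * ENNReal.ofReal (f u) := by
      rw [hB, ofReal_integral_eq_lintegral_ofReal hφyiteint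
        (Eventually.of_forall fun ω => by
          by_cases h : x ≤ φ l (Y ω) <;> simp [h, (hφy_pos l hl (Y ω)).le])]
      have hpt : ∀ ω, ENNReal.ofReal (if x ≤ φ l (Y ω) then φy l (Y ω) else 0)
          = (fun u => if yl ≤ u then c u else 0) (Y ω) := by
        intro ω
        simp only
        by_cases h : x ≤ φ l (Y ω)
        · rw [if_pos h, if_pos (show yl ≤ Y ω from (hiff (Y ω)).1 h)]
        · rw [if_neg h, if_neg (show ¬ (yl ≤ Y ω) from fun hc => h ((hiff (Y ω)).2 hc)),
            ENNReal.ofReal_zero]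
      rw [lintegral_congr hpt]
      rw [lint_transfer hYmeas hf_pos hf_cont hf_density _
        (Measurable.ite measurableSet_Ici hcmeas measurable_const)]
      have hind : ∀ u, (if yl ≤ u then c u else 0) * ENNReal.ofReal (f u)
          = (Ici yl).indicator (fun u => c u * ENNReal.ofReal (f u)) u := by
        intro u
        by_cases h : yl ≤ u <;> simp [Set.indicator_apply, h]
      rw [lintegral_congr hind, lintegral_indicator measurableSet_Ici,
        Measure.restrict_congr_set Ioi_ae_eq_Ici.symm]
    have hSmeas : Measurable (S f) := (S_cont hf_cont hf_int).measurable
    have hstep2 : f yl * A ≤ S f yl * B := by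
      have hmain : ENNReal.ofReal (f yl) * ENNReal.ofReal A
          ≤ ENNReal.ofReal (S f yl) * ENNReal.ofReal B := by
        rw [hAof, hBof,
          ← lintegral_const_mul _ (f := fun u => c u * ENNReal.ofReal (S f u)) (hcmeas.mul hSmeas.ennreal_ofReal),
          ← lintegral_const_mul _ (f := fun u => c u * ENNReal.ofReal (f u)) (hcmeas.mul hf_cont.measurable.ennreal_ofReal)]
        apply setLIntegral_mono
          (measurable_const.mul (hcmeas.mul hf_cont.measurable.ennreal_ofReal))
        intro u hu
        have hhaz := hazard hf_pos hf_cont hf_int hsurv (le_of_lt (mem_Ioi.1 hu))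
        have hφyu := (hφy_pos l hl u).le
        rw [hc]
        calc ENNReal.ofReal (f yl) * (ENNReal.ofReal (φy l u) * ENNReal.ofReal (S f u))
            = ENNReal.ofReal (f yl * (φy l u * S f u)) := by
              rw [ENNReal.ofReal_mul hfpos.le, ENNReal.ofReal_mul hφyu]
          _ ≤ ENNReal.ofReal (S f yl * (φy l u * f u)) := by
              apply ENNReal.ofReal_le_ofReal
              nlinarith [mul_le_mul_of_nonneg_left hhaz hφyu]
          _ = ENNReal.ofReal (S f yl) * (ENNReal.ofReal (φy l u) * ENNReal.ofReal (f u)) := by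
              rw [ENNReal.ofReal_mul hSpos.le, ENNReal.ofReal_mul hφyu]
      calc f yl * A = (ENNReal.ofReal (f yl * A)).toReal := by
            rw [ENNReal.toReal_ofReal (by positivity)]
        _ ≤ (ENNReal.ofReal (S f yl * B)).toReal := by
            apply ENNReal.toReal_mono ENNReal.ofReal_ne_top
            rw [ENNReal.ofReal_mul hfpos.le, ENNReal.ofReal_mul hSpos.le]
            exact hmain
        _ = S f yl * B := ENNReal.toReal_ofReal (by positivity)
    nlinarith [mul_le_mul_of_nonneg_left hstep2 hr.le,
      mul_le_mul_of_nonneg_right hstep1 hSpos.le]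




variable {Ω : Type*} [MeasurableSpace Ω] {P : Measure Ω} [IsProbabilityMeasure P]
  {Y : Ω → ℝ} {f : ℝ → ℝ} {φ φl φy : ℝ → ℝ → ℝ} {x : ℝ}

noncomputable def Psi (P : Measure Ω) (Y : Ω → ℝ) (φ : ℝ → ℝ → ℝ) (l x : ℝ) : ℝ :=
  if P {ω | x ≤ φ l (Y ω)} ≠ 0 then
    x + (∫ ω, max (φ l (Y ω) - x) 0 ∂P) / (P {ω | x ≤ φ l (Y ω)}).toReal
  else x


theorem hP0_eq (hφy : ∀ l : ℝ, 0 < l → ∀ y : ℝ, HasDerivAt (fun y' => φ l y') (φy l y) y)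
    (hφy_pos : ∀ l : ℝ, 0 < l → ∀ y : ℝ, 0 < φy l y)
    (hYmeas : Measurable Y)
    (hf_density : ∀ s : Set ℝ, MeasurableSet s →
      P (Y ⁻¹' s) = ENNReal.ofReal (∫ u in s, f u))
    {l : ℝ} (hl : 0 < l) : P {ω | φ l (Y ω) = x} = 0 := by
  have hsm := strictMono_slice hφy hφy_pos hl
  by_cases hex : ∃ y0, φ l y0 = x
  · obtain ⟨y0, hy0⟩ := hex
    have hsub : {ω | φ l (Y ω) = x} ⊆ Y ⁻¹' {y0} := by
      intro ω hω
      simp only [mem_setOf_eq] at hω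
      have : Y ω = y0 := hsm.injective (by rw [hω, hy0])
      simpa using this
    exact le_antisymm (le_trans (measure_mono hsub)
      (le_of_eq (P_singleton hYmeas hf_density y0))) (zero_le)
  · push_neg at hex
    have : {ω | φ l (Y ω) = x} = ∅ := by
      ext ω; simp [hex (Y ω)]
    simp [this]

theorem Pset_of_mid (hφy : ∀ l : ℝ, 0 < l → ∀ y : ℝ, HasDerivAt (fun y' => φ l y') (φy l y) y)
    (hφy_pos : ∀ l : ℝ, 0 < l → ∀ y : ℝ, 0 < φy l y)
    (hYmeas : Measurable Y)
    (hf_density : ∀ s : Set ℝ, MeasurableSet s →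
      P (Y ⁻¹' s) = ENNReal.ofReal (∫ u in s, f u))
    {l : ℝ} (hm : Mid φ x l) :
    P {ω | x ≤ φ l (Y ω)} = ENNReal.ofReal (S f (yf φ x l)) := by
  have hiff := (yf_spec hφy hφy_pos hm).2
  have hset : {ω | x ≤ φ l (Y ω)} = Y ⁻¹' (Ici (yf φ x l)) := by
    ext ω; simp [hiff (Y ω), mem_Ici]
  rw [hset, hf_density _ measurableSet_Ici]
  rfl

theorem Psi_of_mid (hφy : ∀ l : ℝ, 0 < l → ∀ y : ℝ, HasDerivAt (fun y' => φ l y') (φy l y) y)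
    (hφy_pos : ∀ l : ℝ, 0 < l → ∀ y : ℝ, 0 < φy l y)
    (hYmeas : Measurable Y)
    (hf_pos : ∀ x, 0 < f x) (hf_cont : Continuous f)
    (hf_density : ∀ s : Set ℝ, MeasurableSet s →
      P (Y ⁻¹' s) = ENNReal.ofReal (∫ u in s, f u))
    {l : ℝ} (hm : Mid φ x l) :
    Psi P Y φ l x = x + (∫ ω, max (φ l (Y ω) - x) 0 ∂P) / S f (yf φ x l) := by
  have hf_int : Integrable f := f_integrable hYmeas hf_density
  have hSpos := S_pos hf_pos hf_cont hf_int (yf φ x l)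
  have hP := Pset_of_mid hφy hφy_pos hYmeas hf_density hm
  rw [Psi, if_pos, hP, ENNReal.toReal_ofReal hSpos.le]
  rw [hP]
  simp [ENNReal.ofReal_eq_zero, not_le, hSpos]

theorem Psi_ge_x (l : ℝ) : x ≤ Psi P Y φ l x := by
  rw [Psi]
  split
  · have h1 : 0 ≤ ∫ ω, max (φ l (Y ω) - x) 0 ∂P := integral_nonneg fun ω => le_max_right _ _
    have h2 : 0 ≤ (P {ω | x ≤ φ l (Y ω)}).toReal := ENNReal.toReal_nonneg
    have := div_nonneg h1 h2
    linarith
  · exact le_refl x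

theorem A_ge (hYmeas : Measurable Y)
    (hint : ∀ η : ℝ, 0 < η → Integrable (fun ω => φ η (Y ω)) P)
    (hcentered : ∀ l : ℝ, 0 ≤ l → (∫ ω, φ l (Y ω) ∂P) = 0)
    {l : ℝ} (hl : 0 < l) : -x ≤ ∫ ω, max (φ l (Y ω) - x) 0 ∂P := by
  have h1 : (∫ ω, (φ l (Y ω) - x) ∂P) ≤ ∫ ω, max (φ l (Y ω) - x) 0 ∂P := by
    apply integral_mono ((hint l hl).sub (integrable_const x))
    · have h := ((hint l hl).sub (integrable_const x)).pos_part
      exact h.congr (Eventually.of_forall fun ω => rfl)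
    · exact fun ω => le_max_left _ _
  rw [integral_sub (hint l hl) (integrable_const x), hcentered l hl.le] at h1
  simpa using h1

theorem Psi_nonneg (hφy : ∀ l : ℝ, 0 < l → ∀ y : ℝ, HasDerivAt (fun y' => φ l y') (φy l y) y)
    (hφy_pos : ∀ l : ℝ, 0 < l → ∀ y : ℝ, 0 < φy l y)
    (hYmeas : Measurable Y)
    (hint : ∀ η : ℝ, 0 < η → Integrable (fun ω => φ η (Y ω)) P)
    (hcentered : ∀ l : ℝ, 0 ≤ l → (∫ ω, φ l (Y ω) ∂P) = 0)
    {l : ℝ} (hl : 0 < l) : 0 ≤ Psi P Y φ l x := by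
  by_cases hc : ∃ u, x < φ l u
  · -- there are values above x
    rw [Psi]
    split
    next hP =>
      have hA0 : 0 ≤ ∫ ω, max (φ l (Y ω) - x) 0 ∂P := integral_nonneg fun ω => le_max_right _ _
      have hAx := A_ge hYmeas hint hcentered hl (x := x)
      have hp1 : (P {ω | x ≤ φ l (Y ω)}).toReal ≤ 1 := by
        rw [← ENNReal.toReal_one]
        exact ENNReal.toReal_mono (by simp) prob_le_one
      have hppos : 0 < (P {ω | x ≤ φ l (Y ω)}).toReal := by
        rw [ENNReal.toReal_pos_iff]
        exact ⟨pos_iff_ne_zero.2 hP, lt_of_le_of_lt prob_le_one ENNReal.one_lt_top⟩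
      have hdivge : (∫ ω, max (φ l (Y ω) - x) 0 ∂P)
          ≤ (∫ ω, max (φ l (Y ω) - x) 0 ∂P) / (P {ω | x ≤ φ l (Y ω)}).toReal := by
        rw [le_div_iff₀ hppos]
        nlinarith
      linarith
    next hP =>
      rw [not_not] at hP
      have hae : ∀ᵐ ω ∂P, φ l (Y ω) < x := by
        rw [ae_iff]
        convert hP using 2
        ext ω; simp [not_lt]
      have h2 : (∫ ω, φ l (Y ω) ∂P) ≤ ∫ _ω, x ∂P :=
        integral_mono_ae (hint l hl) (integrable_const x) (hae.mono fun ω h => h.le)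
      rw [hcentered l hl.le] at h2
      simpa using h2
  · -- all values ≤ x : Psi = x and 0 ≤ x since E φ = 0
    push_neg at hc
    have hx : 0 ≤ x := by
      have h0 := hcentered l hl.le
      have : (∫ ω, φ l (Y ω) ∂P) ≤ ∫ _ω, x ∂P := integral_mono (hint l hl)
        (integrable_const x) (fun ω => hc (Y ω))
      rw [h0] at this
      simpa using this
    rw [Psi]
    split
    · have hA : (∫ ω, max (φ l (Y ω) - x) 0 ∂P) = 0 := by
        have : ∀ ω, max (φ l (Y ω) - x) 0 = 0 := fun ω => max_eq_right (by linarith [hc (Y ω)])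
        simp [this]
      rw [hA]
      simpa using hx
    · exact hx


theorem Psi_of_b (hYmeas : Measurable Y)
    (hint : ∀ η : ℝ, 0 < η → Integrable (fun ω => φ η (Y ω)) P)
    (hcentered : ∀ l : ℝ, 0 ≤ l → (∫ ω, φ l (Y ω) ∂P) = 0)
    {l : ℝ} (hl : 0 < l) (hb : ∀ u, x ≤ φ l u) : Psi P Y φ l x = 0 := by
  have hset : {ω | x ≤ φ l (Y ω)} = univ := eq_univ_of_forall fun ω => hb (Y ω)
  have hA : (∫ ω, max (φ l (Y ω) - x) 0 ∂P) = -x := by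
    have hmax : ∀ ω : Ω, max (φ l (Y ω) - x) 0 = φ l (Y ω) - x := fun ω =>
      max_eq_left (by linarith [hb (Y ω)])
    rw [integral_congr_ae (Eventually.of_forall hmax),
      integral_sub (hint l hl) (integrable_const x), hcentered l hl.le]
    simp
  rw [Psi, if_pos] <;> rw [hset, measure_univ]
  · rw [hA]; simp
  · simp

theorem Psi_of_c {l : ℝ} (hc : ∀ u, φ l u ≤ x) : Psi P Y φ l x = x := by
  have hA : (∫ ω, max (φ l (Y ω) - x) 0 ∂P) = 0 := by
    have hmax : ∀ ω : Ω, max (φ l (Y ω) - x) 0 = 0 := fun ω =>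
      max_eq_right (by linarith [hc (Y ω)])
    simp [hmax]
  rw [Psi]
  split
  · rw [hA]; simp
  · rfl

theorem mono_mid
    (hYmeas : Measurable Y)
    (hf_pos : ∀ x, 0 < f x) (hf_cont : Continuous f)
    (hf_density : ∀ s : Set ℝ, MeasurableSet s →
      P (Y ⁻¹' s) = ENNReal.ofReal (∫ u in s, f u))
    (hsurv : ConcaveOn ℝ Set.univ (fun z => Real.log (S f z)))
    (hφy : ∀ l : ℝ, 0 < l → ∀ y : ℝ, HasDerivAt (fun y' => φ l y') (φy l y) y)
    (hφl : ∀ l : ℝ, 0 < l → ∀ y : ℝ, HasDerivAt (fun l' => φ l' y) (φl l y) l)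
    (hφy_cont : ContinuousOn (fun p : ℝ × ℝ => φy p.1 p.2) (Set.Ioi 0 ×ˢ Set.univ))
    (hφl_cont : ContinuousOn (fun p : ℝ × ℝ => φl p.1 p.2) (Set.Ioi 0 ×ˢ Set.univ))
    (hφy_pos : ∀ l : ℝ, 0 < l → ∀ y : ℝ, 0 < φy l y)
    (hratio : ∀ l : ℝ, 0 < l → Monotone (fun y => φl l y / φy l y))
    {τm : ℝ → EReal}
    (hτm : ∀ l : ℝ, 0 < l → Tendsto (fun y => (φ l y : EReal)) atBot (nhds (τm l)))
    (hτm_anti : AntitoneOn τm (Set.Ioi (0:ℝ)))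
    (hτp : (∀ l : ℝ, 0 < l → Tendsto (fun y => φ l y) atTop atTop) ∨
      (∃ τp : ℝ → ℝ, (∀ l : ℝ, 0 < l → Tendsto (fun y => φ l y) atTop (nhds (τp l))) ∧
        MonotoneOn τp (Set.Ioi (0:ℝ)) ∧ ContDiffOn ℝ 1 τp (Set.Ioi (0:ℝ))))
    (hint : ∀ η : ℝ, 0 < η → Integrable (fun ω => φ η (Y ω)) P)
    (hdom : ∀ η : ℝ, 0 < η → ∃ g : Ω → ℝ, Integrable g P ∧
      ∀ ω : Ω, ∀ l ∈ Set.Ioc (0:ℝ) η, |φl l (Y ω)| ≤ g ω)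
    (hcentered : ∀ l : ℝ, 0 ≤ l → (∫ ω, φ l (Y ω) ∂P) = 0)
    {l₁ l₂ : ℝ} (h1 : 0 < l₁) (h12 : l₁ ≤ l₂) (hm1 : Mid φ x l₁) :
    Psi P Y φ l₁ x ≤ Psi P Y φ l₂ x := by
  rcases eq_or_lt_of_le h12 with rfl | hlt
  · exact le_refl _
  have hf_int : Integrable f := f_integrable hYmeas hf_density
  have hScont : Continuous (S f) := S_cont hf_cont hf_int
  have hmid : ∀ l' ∈ Ici l₁, Mid φ x l' := fun l' hl' =>
    mid_up_closed hφy hφy_pos hτm hτm_anti hτp h1 hl' hm1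
  have hm2 : Mid φ x l₂ := hmid l₂ (le_of_lt hlt)
  rw [Psi_of_mid hφy hφy_pos hYmeas hf_pos hf_cont hf_density hm1,
    Psi_of_mid hφy hφy_pos hYmeas hf_pos hf_cont hf_density hm2]
  set A : ℝ → ℝ := fun l => ∫ ω, max (φ l (Y ω) - x) 0 ∂P with hAdef
  set G : ℝ → ℝ := fun l => x + A l / S f (yf φ x l) with hGdef
  show G l₁ ≤ G l₂
  have hpos : ∀ l ∈ Icc l₁ l₂, 0 < l := fun l hl => lt_of_lt_of_le h1 hl.1
  have hSypos : ∀ l : ℝ, 0 < S f (yf φ x l) := fun l => S_pos hf_pos hf_cont hf_int _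
  -- continuity of G on Icc
  have hcontA : ContinuousOn A (Icc l₁ l₂) := by
    intro l hl
    exact ((A_hasDeriv (x := x) hφy hφl hφl_cont hYmeas hint hdom (hpos l hl)
      (hP0_eq (x := x) hφy hφy_pos hYmeas hf_density (hpos l hl))).2.continuousAt).continuousWithinAt
  have hcontSy : ContinuousOn (fun l => S f (yf φ x l)) (Icc l₁ l₂) := by
    intro l hl
    exact hScont.continuousAt.comp_continuousWithinAt
      ((yf_contWithin hφy hφy_pos hφl h1 hmid hl.1).mono
        (Icc_subset_Ici_self))
  have hcontG : ContinuousOn G (Icc l₁ l₂) :=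
    continuousOn_const.add (hcontA.div hcontSy (fun l _ => ne_of_gt (hSypos l)))
  -- derivative of G on Ioo
  have hderivG : ∀ l ∈ Ioo l₁ l₂, HasDerivAt G
      (((∫ ω, (if x ≤ φ l (Y ω) then φl l (Y ω) else 0) ∂P) * S f (yf φ x l)
        - A l * ((-(f (yf φ x l))) * (-(φl l (yf φ x l) / φy l (yf φ x l)))))
        / (S f (yf φ x l)) ^ 2) l := by
    intro l hl
    have hl0 : 0 < l := lt_of_lt_of_le h1 hl.1.le
    have hdA := (A_hasDeriv (x := x) hφy hφl hφl_cont hYmeas hint hdom hl0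
      (hP0_eq (x := x) hφy hφy_pos hYmeas hf_density hl0)).2
    have hdy := yf_hasDeriv hφy hφy_pos hφl hφy_cont hφl_cont h1 hmid hl.1
    have hdS := (S_hasDerivAt hf_cont hf_int (yf φ x l)).comp l hdy
    have hfinal := (hasDerivAt_const l x).add (hdA.div hdS (ne_of_gt (hSypos l)))
    simp only [Function.comp] at hfinal
    refine HasDerivAt.congr_deriv (f := G) hfinal ?_
    ring
  apply monotoneOn_of_deriv_nonneg (convex_Icc l₁ l₂) hcontG ?_ ?_
    (left_mem_Icc.2 h12) (right_mem_Icc.2 h12) h12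
  · intro l hl
    rw [interior_Icc] at hl
    exact ((hderivG l hl).differentiableAt).differentiableWithinAt
  · intro l hl
    rw [interior_Icc] at hl
    rw [(hderivG l hl).deriv]
    have hl0 : 0 < l := lt_of_lt_of_le h1 hl.1.le
    have hkey := key_ineq hYmeas hf_pos hf_cont hf_density hsurv hφy hφl hφy_cont hφl_cont
      hφy_pos hratio hint hdom hcentered hl0 (hmid l (le_of_lt hl.1))
    apply div_nonneg _ (sq_nonneg _)
    nlinarith [hkey]


theorem main_pos
    (hYmeas : Measurable Y)
    (hf_pos : ∀ x, 0 < f x) (hf_cont : Continuous f)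
    (hf_density : ∀ s : Set ℝ, MeasurableSet s →
      P (Y ⁻¹' s) = ENNReal.ofReal (∫ u in s, f u))
    (hsurv : ConcaveOn ℝ Set.univ (fun z => Real.log (S f z)))
    (hφy : ∀ l : ℝ, 0 < l → ∀ y : ℝ, HasDerivAt (fun y' => φ l y') (φy l y) y)
    (hφl : ∀ l : ℝ, 0 < l → ∀ y : ℝ, HasDerivAt (fun l' => φ l' y) (φl l y) l)
    (hφy_cont : ContinuousOn (fun p : ℝ × ℝ => φy p.1 p.2) (Set.Ioi 0 ×ˢ Set.univ))
    (hφl_cont : ContinuousOn (fun p : ℝ × ℝ => φl p.1 p.2) (Set.Ioi 0 ×ˢ Set.univ))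
    (hφy_pos : ∀ l : ℝ, 0 < l → ∀ y : ℝ, 0 < φy l y)
    (hratio : ∀ l : ℝ, 0 < l → Monotone (fun y => φl l y / φy l y))
    {τm : ℝ → EReal}
    (hτm : ∀ l : ℝ, 0 < l → Tendsto (fun y => (φ l y : EReal)) atBot (nhds (τm l)))
    (hτm_anti : AntitoneOn τm (Set.Ioi (0:ℝ)))
    (hτp : (∀ l : ℝ, 0 < l → Tendsto (fun y => φ l y) atTop atTop) ∨
      (∃ τp : ℝ → ℝ, (∀ l : ℝ, 0 < l → Tendsto (fun y => φ l y) atTop (nhds (τp l))) ∧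
        MonotoneOn τp (Set.Ioi (0:ℝ)) ∧ ContDiffOn ℝ 1 τp (Set.Ioi (0:ℝ))))
    (hint : ∀ η : ℝ, 0 < η → Integrable (fun ω => φ η (Y ω)) P)
    (hdom : ∀ η : ℝ, 0 < η → ∃ g : Ω → ℝ, Integrable g P ∧
      ∀ ω : Ω, ∀ l ∈ Set.Ioc (0:ℝ) η, |φl l (Y ω)| ≤ g ω)
    (hcentered : ∀ l : ℝ, 0 ≤ l → (∫ ω, φ l (Y ω) ∂P) = 0)
    {l₁ l₂ : ℝ} (h1 : 0 < l₁) (h12 : l₁ ≤ l₂) :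
    Psi P Y φ l₁ x ≤ Psi P Y φ l₂ x := by
  by_cases hm1 : Mid φ x l₁
  · exact mono_mid hYmeas hf_pos hf_cont hf_density hsurv hφy hφl hφy_cont hφl_cont hφy_pos
      hratio hτm hτm_anti hτp hint hdom hcentered h1 h12 hm1
  · by_cases hb : ∀ u, x ≤ φ l₁ u
    · rw [Psi_of_b hYmeas hint hcentered h1 hb]
      exact Psi_nonneg hφy hφy_pos hYmeas hint hcentered (lt_of_lt_of_le h1 h12)
    · have hc : ∀ u, φ l₁ u ≤ x := by
        by_contra hcc
        push_neg at hcc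
        push_neg at hb
        obtain ⟨u0, hu0⟩ := hb
        exact hm1 ⟨h1, ⟨u0, hu0⟩, hcc⟩
      rw [Psi_of_c hc]
      exact Psi_ge_x l₂



variable {Ω : Type*} [MeasurableSpace Ω] {P : Measure Ω} [IsProbabilityMeasure P]
  {Y : Ω → ℝ} {f : ℝ → ℝ} {φ φl φy : ℝ → ℝ → ℝ} {x : ℝ}



theorem main_zero
    (hYmeas : Measurable Y)
    (hφ_cont : ContinuousOn (fun p : ℝ × ℝ => φ p.1 p.2) (Set.Ici 0 ×ˢ Set.univ))
    (hφy : ∀ l : ℝ, 0 < l → ∀ y : ℝ, HasDerivAt (fun y' => φ l y') (φy l y) y)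
    (hφl : ∀ l : ℝ, 0 < l → ∀ y : ℝ, HasDerivAt (fun l' => φ l' y) (φl l y) l)
    (hint : ∀ η : ℝ, 0 < η → Integrable (fun ω => φ η (Y ω)) P)
    (hdom : ∀ η : ℝ, 0 < η → ∃ g : Ω → ℝ, Integrable g P ∧
      ∀ ω : Ω, ∀ l ∈ Set.Ioc (0:ℝ) η, |φl l (Y ω)| ≤ g ω)
    {l₂ : ℝ} (h2 : 0 < l₂)
    (hmain : ∀ l ∈ Set.Ioc (0:ℝ) l₂, Psi P Y φ l x ≤ Psi P Y φ l₂ x) :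
    Psi P Y φ 0 x ≤ Psi P Y φ l₂ x := by
  classical
  -- continuity of φ 0
  have hφ0cont : Continuous (φ 0) := by
    have : Continuous ((fun p : ℝ × ℝ => φ p.1 p.2) ∘ (fun y => ((0:ℝ), y))) :=
      hφ_cont.comp_continuous (by fun_prop) (fun y => ⟨self_mem_Ici, mem_univ _⟩)
    exact this
  have hφ0meas : Measurable (fun ω => φ 0 (Y ω)) := hφ0cont.measurable.comp hYmeas
  set E : ℝ → Set Ω := fun l => {ω | x ≤ φ l (Y ω)} with hE
  have hE0meas : MeasurableSet (E 0) := measurableSet_le measurable_const hφ0meas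
  by_cases hP0 : P (E 0) = 0
  · rw [Psi, if_neg (by simpa [hE] using hP0)]
    exact Psi_ge_x l₂
  -- sequence
  set L : ℕ → ℝ := fun n => l₂ / (n + 1) with hL
  have hLpos : ∀ n, 0 < L n := fun n => div_pos h2 (by positivity)
  have hLle : ∀ n, L n ≤ l₂ := by
    intro n
    rw [hL]
    rw [div_le_iff₀ (by positivity : (0:ℝ) < (n:ℝ) + 1)]
    nlinarith [Nat.cast_nonneg (α := ℝ) n]
  have hLtend : Tendsto L atTop (nhds 0) := by
    have h := tendsto_one_div_add_atTop_nhds_zero_nat (𝕜 := ℝ)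
    have h2' := h.const_mul l₂
    simp only [mul_zero] at h2'
    apply h2'.congr
    intro n
    rw [hL]
    field_simp
  have hEmeas : ∀ n, MeasurableSet (E (L n)) := fun n =>
    measurableSet_le measurable_const (meas_phi hφy hYmeas (hLpos n))
  -- pointwise convergence of φ (L n) (Y ω)
  have hφtend : ∀ ω, Tendsto (fun n => φ (L n) (Y ω)) atTop (nhds (φ 0 (Y ω))) := by
    intro ω
    have hw : ContinuousWithinAt (fun p : ℝ × ℝ => φ p.1 p.2) (Set.Ici 0 ×ˢ Set.univ)
        (0, Y ω) := hφ_cont _ ⟨self_mem_Ici, mem_univ _⟩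
    have hseq : Tendsto (fun n => ((L n, Y ω) : ℝ × ℝ)) atTop
        (nhdsWithin (0, Y ω) (Set.Ici 0 ×ˢ Set.univ)) := by
      rw [tendsto_nhdsWithin_iff]
      exact ⟨hLtend.prodMk_nhds tendsto_const_nhds,
        Eventually.of_forall fun n => ⟨(hLpos n).le, mem_univ _⟩⟩
    exact hw.tendsto.comp hseq
  -- domination
  obtain ⟨g, hgint, hg⟩ := hdom l₂ h2
  have hgnonneg : ∀ ω, 0 ≤ g ω := fun ω =>
    le_trans (abs_nonneg _) (hg ω l₂ ⟨h2, le_refl _⟩)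
  have hlip : ∀ ω, ∀ l ∈ Set.Ioc (0:ℝ) l₂, |φ l (Y ω) - φ l₂ (Y ω)| ≤ g ω * l₂ := by
    intro ω l hl
    rcases eq_or_lt_of_le hl.2 with heq | hlt
    · rw [heq]
      simp only [sub_self, abs_zero]
      exact mul_nonneg (hgnonneg ω) h2.le
    · have hcont : ContinuousOn (fun t => φ t (Y ω)) (Icc l l₂) := fun t ht =>
        ((hφl t (lt_of_lt_of_le hl.1 ht.1) (Y ω)).differentiableAt.continuousAt).continuousWithinAt
      obtain ⟨ζ, hζI, hζeq⟩ := exists_hasDerivAt_eq_slope (fun t => φ t (Y ω))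
        (fun t => φl t (Y ω)) hlt hcont
        (fun t ht => hφl t (lt_of_lt_of_le hl.1 (mem_Icc_of_Ioo ht).1) (Y ω))
      replace hζeq : φl ζ (Y ω) = (φ l₂ (Y ω) - φ l (Y ω)) / (l₂ - l) := hζeq
      have hne : l₂ - l ≠ 0 := by intro h; linarith
      rw [eq_div_iff hne] at hζeq
      have hgζ : |φl ζ (Y ω)| ≤ g ω := hg ω ζ ⟨lt_trans hl.1 hζI.1, le_of_lt hζI.2⟩
      have : |φ l (Y ω) - φ l₂ (Y ω)| = |φl ζ (Y ω)| * (l₂ - l) := by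
        rw [abs_sub_comm, ← hζeq, abs_mul, abs_of_pos (by linarith : (0:ℝ) < l₂ - l)]
      rw [this]
      have h1 : |φl ζ (Y ω)| * (l₂ - l) ≤ g ω * (l₂ - l) :=
        mul_le_mul_of_nonneg_right hgζ (by linarith)
      have h2' : g ω * (l₂ - l) ≤ g ω * l₂ :=
        mul_le_mul_of_nonneg_left (by linarith [hl.1]) (hgnonneg ω)
      linarith
  set bound : Ω → ℝ := fun ω => |φ l₂ (Y ω)| + g ω * l₂ + |x| with hbounddef
  have hboundint : Integrable bound P :=
    ((hint l₂ h2).abs.add (hgint.mul_const l₂)).add (integrable_const |x|)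
  have hbound : ∀ n, ∀ ω, ‖max (φ (L n) (Y ω) - x) 0‖ ≤ bound ω := by
    intro n ω
    rw [Real.norm_eq_abs]
    have h3 := hlip ω (L n) ⟨hLpos n, hLle n⟩
    have habs : |max (φ (L n) (Y ω) - x) 0| ≤ |φ (L n) (Y ω) - x| := by
      rw [abs_of_nonneg (le_max_right _ _)]
      rcases le_or_gt (φ (L n) (Y ω) - x) 0 with h | h
      · rw [max_eq_right h]; exact abs_nonneg _
      · rw [max_eq_left h.le]; exact le_abs_self _
    have : |φ (L n) (Y ω) - x| ≤ |φ (L n) (Y ω) - φ l₂ (Y ω)| + |φ l₂ (Y ω)| + |x| := by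
      have := abs_sub (φ (L n) (Y ω)) x
      calc |φ (L n) (Y ω) - x| ≤ |φ (L n) (Y ω)| + |x| := abs_sub _ _
        _ ≤ |φ (L n) (Y ω) - φ l₂ (Y ω)| + |φ l₂ (Y ω)| + |x| := by
            have := abs_sub_abs_le_abs_sub (φ (L n) (Y ω)) (φ l₂ (Y ω))
            have h4 := abs_sub_abs_le_abs_sub (φ (L n) (Y ω)) (φ l₂ (Y ω))
            linarith [abs_nonneg (φ (L n) (Y ω) - φ l₂ (Y ω))]
    rw [hbounddef]
    simp only
    linarith
  -- convergence of A
  set A : ℝ → ℝ := fun l => ∫ ω, max (φ l (Y ω) - x) 0 ∂P with hA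
  have hAtend : Tendsto (fun n => A (L n)) atTop (nhds (A 0)) := by
    apply tendsto_integral_of_dominated_convergence bound
      (fun n => ((meas_phi hφy hYmeas (hLpos n)).sub measurable_const).max
        measurable_const |>.aestronglyMeasurable)
      hboundint
      (fun n => Eventually.of_forall (hbound n))
    refine Eventually.of_forall fun ω => ?_
    exact (((hφtend ω).sub tendsto_const_nhds).max tendsto_const_nhds)
  have hA0nonneg : 0 ≤ A 0 := integral_nonneg fun ω => le_max_right _ _
  by_cases hA0 : A 0 = 0
  · have hP0' : P {ω | x ≤ φ 0 (Y ω)} ≠ 0 := hP0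
    have hPsi0 : Psi P Y φ 0 x = x := by
      rw [Psi, if_pos hP0']
      have hz : (∫ ω, max (φ 0 (Y ω) - x) 0 ∂P) = 0 := hA0
      rw [hz, zero_div, add_zero]
    rw [hPsi0]
    exact Psi_ge_x l₂
  have hA0pos : 0 < A 0 := lt_of_le_of_ne hA0nonneg (Ne.symm hA0)
  set Q : Set Ω := {ω | x < φ 0 (Y ω)} with hQ
  have hQmeas : MeasurableSet Q := measurableSet_lt measurable_const hφ0meas
  have hqpos : 0 < (P Q).toReal := by
    rcases eq_or_ne (P Q) 0 with hq0 | hqne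
    · exfalso
      have hae : ∀ᵐ ω ∂P, ¬ (x < φ 0 (Y ω)) := by
        rw [ae_iff]
        convert hq0 using 2
        ext ω; simp [hQ]
      have hzero : A 0 = 0 := by
        have hptwise : ∀ᵐ ω ∂P, max (φ 0 (Y ω) - x) 0 = (fun _ : Ω => (0:ℝ)) ω :=
          hae.mono fun ω h => max_eq_right (by linarith [not_lt.1 h])
        have h5 : A 0 = ∫ _ω, (0:ℝ) ∂P := integral_congr_ae hptwise
        simpa using h5
      exact absurd hzero hA0
    · exact ENNReal.toReal_pos hqne (measure_ne_top P _)
  set p0 := (P (E 0)).toReal with hp0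
  have hp0pos : 0 < p0 := ENNReal.toReal_pos hP0 (measure_ne_top P _)
  -- the two error sets
  set D : ℕ → Set Ω := fun n => E (L n) ∩ {ω | φ 0 (Y ω) < x} with hD
  have hDmeas : ∀ n, MeasurableSet (D n) := fun n =>
    (hEmeas n).inter (measurableSet_lt hφ0meas measurable_const)
  set G : ℕ → Set Ω := fun n => Q ∩ (E (L n))ᶜ with hG
  have hGmeas : ∀ n, MeasurableSet (G n) := fun n => hQmeas.inter (hEmeas n).compl
  have hindic : ∀ (s : Set Ω), MeasurableSet s →
      (P s).toReal = ∫ ω, Set.indicator s (fun _ => (1:ℝ)) ω ∂P := by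
    intro s hs
    rw [integral_indicator_const _ hs]
    simp
    rfl
  have hDtend : Tendsto (fun n => (P (D n)).toReal) atTop (nhds 0) := by
    have heq : ∀ n, (P (D n)).toReal = ∫ ω, Set.indicator (D n) (fun _ => (1:ℝ)) ω ∂P :=
      fun n => hindic _ (hDmeas n)
    rw [show (fun n => (P (D n)).toReal)
      = fun n => ∫ ω, Set.indicator (D n) (fun _ => (1:ℝ)) ω ∂P from funext heq]
    have h0 : (0:ℝ) = ∫ _ω, (0:ℝ) ∂P := by simp
    rw [h0]
    apply tendsto_integral_of_dominated_convergence (fun _ => (1:ℝ))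
      (fun n => (measurable_one.indicator (hDmeas n)).aestronglyMeasurable)
      (integrable_const 1)
      (fun n => Eventually.of_forall fun ω => by
        rw [Real.norm_eq_abs]
        by_cases h : ω ∈ D n <;> simp [Set.indicator_apply, h])
    refine Eventually.of_forall fun ω => ?_
    by_cases hω : φ 0 (Y ω) < x
    · have hev : ∀ᶠ n in atTop, φ (L n) (Y ω) < x :=
        (hφtend ω).eventually (eventually_lt_nhds hω)
      apply tendsto_const_nhds.congr'
      filter_upwards [hev] with n hn
      have hnot : ω ∉ D n := fun hc => absurd hc.1 (not_le.2 hn)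
      rw [Set.indicator_of_notMem hnot]
    · have hnot : ∀ n, ω ∉ D n := fun n hc => absurd hc.2 hω
      apply tendsto_const_nhds.congr
      intro n
      rw [Set.indicator_of_notMem (hnot n)]
  have hGtend : Tendsto (fun n => (P (G n)).toReal) atTop (nhds 0) := by
    have heq : ∀ n, (P (G n)).toReal = ∫ ω, Set.indicator (G n) (fun _ => (1:ℝ)) ω ∂P :=
      fun n => hindic _ (hGmeas n)
    rw [show (fun n => (P (G n)).toReal)
      = fun n => ∫ ω, Set.indicator (G n) (fun _ => (1:ℝ)) ω ∂P from funext heq]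
    have h0 : (0:ℝ) = ∫ _ω, (0:ℝ) ∂P := by simp
    rw [h0]
    apply tendsto_integral_of_dominated_convergence (fun _ => (1:ℝ))
      (fun n => (measurable_one.indicator (hGmeas n)).aestronglyMeasurable)
      (integrable_const 1)
      (fun n => Eventually.of_forall fun ω => by
        rw [Real.norm_eq_abs]
        by_cases h : ω ∈ G n <;> simp [Set.indicator_apply, h])
    refine Eventually.of_forall fun ω => ?_
    by_cases hω : x < φ 0 (Y ω)
    · have hev : ∀ᶠ n in atTop, x < φ (L n) (Y ω) :=
        (hφtend ω).eventually (eventually_gt_nhds hω)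
      apply tendsto_const_nhds.congr'
      filter_upwards [hev] with n hn
      have hnot : ω ∉ G n := fun hc => hc.2 (le_of_lt hn)
      rw [Set.indicator_of_notMem hnot]
    · have hnot : ∀ n, ω ∉ G n := fun n hc => absurd hc.1 hω
      apply tendsto_const_nhds.congr
      intro n
      rw [Set.indicator_of_notMem (hnot n)]
  have hup : ∀ n, (P (E (L n))).toReal ≤ p0 + (P (D n)).toReal := by
    intro n
    have hsub : E (L n) ⊆ E 0 ∪ D n := by
      intro ω hω
      by_cases h0 : x ≤ φ 0 (Y ω)
      · exact Or.inl h0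
      · exact Or.inr ⟨hω, not_le.1 h0⟩
    calc (P (E (L n))).toReal ≤ (P (E 0 ∪ D n)).toReal :=
        ENNReal.toReal_mono (measure_ne_top P _) (measure_mono hsub)
      _ ≤ p0 + (P (D n)).toReal := by
        have h1 := measure_union_le (μ := P) (E 0) (D n)
        have h2 := ENNReal.toReal_mono
          (ENNReal.add_ne_top.2 ⟨measure_ne_top P _, measure_ne_top P _⟩) h1
        rw [ENNReal.toReal_add (measure_ne_top P _) (measure_ne_top P _)] at h2
        exact h2
  have hlow : ∀ n, (P Q).toReal ≤ (P (E (L n))).toReal + (P (G n)).toReal := by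
    intro n
    have hsub : Q ⊆ E (L n) ∪ G n := by
      intro ω hω
      by_cases h0 : x ≤ φ (L n) (Y ω)
      · exact Or.inl h0
      · exact Or.inr ⟨hω, h0⟩
    calc (P Q).toReal ≤ (P (E (L n) ∪ G n)).toReal :=
        ENNReal.toReal_mono (measure_ne_top P _) (measure_mono hsub)
      _ ≤ _ := by
        have h1 := measure_union_le (μ := P) (E (L n)) (G n)
        have h2 := ENNReal.toReal_mono
          (ENNReal.add_ne_top.2 ⟨measure_ne_top P _, measure_ne_top P _⟩) h1
        rw [ENNReal.toReal_add (measure_ne_top P _) (measure_ne_top P _)] at h2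
        exact h2
  have hGsmall : ∀ᶠ n in atTop, (P (G n)).toReal < (P Q).toReal / 2 := by
    have := hGtend.eventually (eventually_lt_nhds (by linarith : (0:ℝ) < (P Q).toReal / 2))
    exact this
  have hfin : ∀ᶠ n in atTop, x + A (L n) / (p0 + (P (D n)).toReal) ≤ Psi P Y φ l₂ x := by
    filter_upwards [hGsmall] with n hn
    have hEpos : 0 < (P (E (L n))).toReal := by linarith [hlow n]
    have hEne : P (E (L n)) ≠ 0 := by
      intro h
      rw [h] at hEpos
      simp at hEpos
    have hEne' : P {ω | x ≤ φ (L n) (Y ω)} ≠ 0 := hEne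
    have hPsiL : Psi P Y φ (L n) x = x + A (L n) / (P (E (L n))).toReal := by
      rw [Psi, if_pos hEne']
    have hAn : 0 ≤ A (L n) := integral_nonneg fun ω => le_max_right _ _
    have hdiv : A (L n) / (p0 + (P (D n)).toReal) ≤ A (L n) / (P (E (L n))).toReal := by
      gcongr
      exact hup n
    calc x + A (L n) / (p0 + (P (D n)).toReal)
        ≤ Psi P Y φ (L n) x := by rw [hPsiL]; linarith
      _ ≤ Psi P Y φ l₂ x := hmain (L n) ⟨hLpos n, hLle n⟩
  have htendfinal : Tendsto (fun n => x + A (L n) / (p0 + (P (D n)).toReal)) atTop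
      (nhds (x + A 0 / p0)) := by
    apply Tendsto.const_add
    have hden : Tendsto (fun n => p0 + (P (D n)).toReal) atTop (nhds p0) := by
      have := tendsto_const_nhds (x := p0) (f := atTop (α := ℕ)) |>.add hDtend
      simpa using this
    exact hAtend.div hden (ne_of_gt hp0pos)
  have hlim := le_of_tendsto htendfinal hfin
  have hP0' : P {ω | x ≤ φ 0 (Y ω)} ≠ 0 := hP0
  have hPsi0 : Psi P Y φ 0 x = x + A 0 / p0 := by
    rw [Psi, if_pos hP0']
  rw [hPsi0]
  exact hlim


end MRLPf

open MRLPf in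
/-- Theorem (MRL peacocks from monotone transformations of IFR random variables).
If `φ ∈ 𝓗` (continuous on `ℝ≥0 × ℝ`, `C¹` on `(0,∞) × ℝ`, with `∂φ/∂y > 0`,
non-decreasing ratio `(∂φ/∂λ)/(∂φ/∂y)` in `y`, non-increasing lower limit `τ₋` and
upper limit `τ₊` either `≡ +∞` or non-decreasing and `C¹`), and if `Y` has a positive
continuous density with log-concave survival function, with the stated integrability
conditions and `E[φ(λ,Y)] = 0` for all `λ ≥ 0`, then `(φ(λ,Y))_{λ≥0}` is a centered
process increasing in the mean residual life order. -/
theorem mrl_process_of_transformation {Ω : Type*} [MeasurableSpace Ω]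
    (P : Measure Ω) [IsProbabilityMeasure P]
    (Y : Ω → ℝ) (hYmeas : Measurable Y)
    (f : ℝ → ℝ) (hf_pos : ∀ x, 0 < f x) (hf_cont : Continuous f)
    (hf_density : ∀ s : Set ℝ, MeasurableSet s →
      P (Y ⁻¹' s) = ENNReal.ofReal (∫ u in s, f u))
    (hsurv_logconc : ConcaveOn ℝ Set.univ
      (fun z => Real.log (∫ u in Set.Ici z, f u)))
    (φ φl φy : ℝ → ℝ → ℝ)
    (hφ_cont : ContinuousOn (fun p : ℝ × ℝ => φ p.1 p.2) (Set.Ici 0 ×ˢ Set.univ))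
    (hφy : ∀ l : ℝ, 0 < l → ∀ y : ℝ, HasDerivAt (fun y' => φ l y') (φy l y) y)
    (hφl : ∀ l : ℝ, 0 < l → ∀ y : ℝ, HasDerivAt (fun l' => φ l' y) (φl l y) l)
    (hφy_cont : ContinuousOn (fun p : ℝ × ℝ => φy p.1 p.2) (Set.Ioi 0 ×ˢ Set.univ))
    (hφl_cont : ContinuousOn (fun p : ℝ × ℝ => φl p.1 p.2) (Set.Ioi 0 ×ˢ Set.univ))
    (hφy_pos : ∀ l : ℝ, 0 < l → ∀ y : ℝ, 0 < φy l y)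
    (hratio : ∀ l : ℝ, 0 < l → Monotone (fun y => φl l y / φy l y))
    (τm : ℝ → EReal)
    (hτm : ∀ l : ℝ, 0 < l →
      Tendsto (fun y => (φ l y : EReal)) atBot (nhds (τm l)))
    (hτm_anti : AntitoneOn τm (Set.Ioi (0:ℝ)))
    (hτp : (∀ l : ℝ, 0 < l → Tendsto (fun y => φ l y) atTop atTop) ∨
      (∃ τp : ℝ → ℝ, (∀ l : ℝ, 0 < l → Tendsto (fun y => φ l y) atTop (nhds (τp l))) ∧
        MonotoneOn τp (Set.Ioi (0:ℝ)) ∧ ContDiffOn ℝ 1 τp (Set.Ioi (0:ℝ))))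
    (hint : ∀ η : ℝ, 0 < η → Integrable (fun ω => φ η (Y ω)) P)
    (hdom : ∀ η : ℝ, 0 < η → ∃ g : Ω → ℝ, Integrable g P ∧
      ∀ ω : Ω, ∀ l ∈ Set.Ioc (0:ℝ) η, |φl l (Y ω)| ≤ g ω)
    (hcentered : ∀ l : ℝ, 0 ≤ l → (∫ ω, φ l (Y ω) ∂P) = 0)
    (Ψ : ℝ → ℝ → ℝ)
    (hΨ : ∀ l : ℝ, 0 ≤ l → ∀ x : ℝ, Ψ l x =
      if P {ω | x ≤ φ l (Y ω)} ≠ 0 then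
        x + (∫ ω, max (φ l (Y ω) - x) 0 ∂P) / (P {ω | x ≤ φ l (Y ω)}).toReal
      else x) :
    ∀ l₁ l₂ : ℝ, 0 ≤ l₁ → l₁ ≤ l₂ → ∀ x : ℝ, Ψ l₁ x ≤ Ψ l₂ x := by
  intro l₁ l₂ h1 h12 x
  have hsurv : ConcaveOn ℝ Set.univ (fun z => Real.log (S f z)) := hsurv_logconc
  rw [hΨ l₁ h1 x, hΨ l₂ (le_trans h1 h12) x]
  show Psi P Y φ l₁ x ≤ Psi P Y φ l₂ x
  rcases eq_or_lt_of_le h1 with heq | hpos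
  · rcases eq_or_lt_of_le (heq ▸ h12 : (0:ℝ) ≤ l₂) with heq2 | hpos2
    · rw [← heq, ← heq2]
    · rw [← heq]
      exact main_zero hYmeas hφ_cont hφy hφl hint hdom hpos2
        (fun l hl => main_pos hYmeas hf_pos hf_cont hf_density hsurv hφy hφl hφy_cont
          hφl_cont hφy_pos hratio hτm hτm_anti hτp hint hdom hcentered hl.1 hl.2)
  · exact main_pos hYmeas hf_pos hf_cont hf_density hsurv hφy hφl hφy_cont hφl_cont
      hφy_pos hratio hτm hτm_anti hτp hint hdom hcentered hpos h12
end

section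
/- Let (μ_t)_{t≥0} be a family of integrable centered probability measures increasing in the MRL order, with integrated survival function C(t,x) = ∫ (y-x)⁺ μ_t(dy). Fix a < b and define μ_t^{a,b}(dy) = 1_{(-∞,a)∪(b,∞)}(y) μ_t(dy) + α_t δ_a(dy) + β_t δ_b(dy), where α_t = (1/(b-a)) ∫_{[a,b]} (b-y) μ_t(dy) and β_t = (1/(b-a)) ∫_{[a,b]} (y-a) μ_t(dy). Then μ_t^{a,b} is a centered probability measure, its integrated survival function equals C^{a,b}(t,x) = ((b-x)/(b-a)) C(t,a) + ((x-a)/(b-a)) C(t,b) for x ∈ [a,b] and C(t,x) otherwise, and the family (μ_t^{a,b})_{t≥0} still increases in the MRL order. -/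
open MeasureTheory Set


section helpers

variable {m : Measure ℝ}

lemma int_pos [IsFiniteMeasure m] (h : Integrable (fun y : ℝ => y) m) (x : ℝ) :
    Integrable (fun y => max (y - x) 0) m :=
  (h.sub (integrable_const x)).pos_part

lemma setInt_Ici (m : Measure ℝ) (x : ℝ) :
    (∫ y in Set.Ici x, (y - x) ∂m) = ∫ y, max (y - x) 0 ∂m := by
  rw [← integral_indicator measurableSet_Ici]
  congr 1
  ext y
  by_cases h : x ≤ y
  · simp [Set.indicator_of_mem (mem_Ici.mpr h), max_eq_left (by linarith : (0:ℝ) ≤ y - x)]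
  · simp [Set.indicator_of_notMem (by simpa using h : y ∉ Ici x),
      max_eq_right (by linarith : y - x ≤ (0:ℝ))]

lemma pos_nonneg (m : Measure ℝ) (x : ℝ) : 0 ≤ ∫ y, max (y - x) 0 ∂m :=
  integral_nonneg fun y => le_max_right _ _

lemma pos_mono [IsFiniteMeasure m] (h : Integrable (fun y : ℝ => y) m) {x₁ x₂ : ℝ}
    (hx : x₁ ≤ x₂) :
    (∫ y, max (y - x₂) 0 ∂m) ≤ ∫ y, max (y - x₁) 0 ∂m :=
  integral_mono (int_pos h x₂) (int_pos h x₁) fun y =>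
    max_le_max (by linarith) le_rfl

lemma pos_eq_zero {b : ℝ} (hb : m (Set.Ioi b) = 0) : (∫ y, max (y - b) 0 ∂m) = 0 := by
  apply integral_eq_zero_of_ae
  rw [Filter.EventuallyEq, ae_iff]
  refine measure_mono_null ?_ hb
  intro y hy
  simp only [mem_setOf_eq, Pi.zero_apply] at hy
  simp only [mem_Ioi]
  by_contra h
  push_neg at h
  exact hy (max_eq_right (by linarith))

lemma pos_pos_ne (hb : (∫ y, max (y - b) 0 ∂m) ≠ 0) : m (Set.Ioi b) ≠ 0 :=
  fun h => hb (pos_eq_zero h)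

end helpers

lemma toReal_ofReal_max (r : ℝ) : (ENNReal.ofReal r).toReal = max r 0 := by
  rcases le_total r 0 with h | h
  · simp [ENNReal.ofReal_eq_zero.mpr h, max_eq_right h]
  · simp [ENNReal.toReal_ofReal h, max_eq_left h]

lemma pos_diff_eq (m : Measure ℝ) [IsFiniteMeasure m] {x b : ℝ} (hxb : x ≤ b)
    (h : Integrable (fun y : ℝ => y) m) :
    (∫ y, max (y - x) 0 ∂m) - (∫ y, max (y - b) 0 ∂m)
      = ∫ u in Set.Ioc x b, (m (Set.Ici u)).toReal := by
  have key : ∀ y : ℝ, max (y - x) 0 - max (y - b) 0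
      = (volume (Set.Ioc x b ∩ Set.Iic y)).toReal := by
    intro y
    have hs : Set.Ioc x b ∩ Set.Iic y = Set.Ioc x (min b y) := by
      ext z; simp only [mem_inter_iff, mem_Ioc, mem_Iic, le_min_iff]; tauto
    rw [hs, Real.volume_Ioc, toReal_ofReal_max]
    rcases le_total y b with h1 | h1
    · rw [min_eq_right h1, max_eq_right (by linarith : y - b ≤ 0)]; ring
    · rw [min_eq_left h1, max_eq_left (by linarith : 0 ≤ y - b),
        max_eq_left (by linarith : 0 ≤ y - x), max_eq_left (by linarith : 0 ≤ b - x)]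
      ring
  haveI : IsFiniteMeasure (volume.restrict (Set.Ioc x b)) := by
    constructor
    rw [Measure.restrict_apply_univ, Real.volume_Ioc]
    exact ENNReal.ofReal_lt_top
  have hmeas : Measurable (fun p : ℝ × ℝ => if p.2 ≤ p.1 then (1:ℝ) else 0) :=
    Measurable.ite (measurableSet_le measurable_snd measurable_fst)
      measurable_const measurable_const
  have hintf : Integrable (Function.uncurry fun y u => if u ≤ y then (1:ℝ) else 0)
      (m.prod (volume.restrict (Set.Ioc x b))) := by
    refine Integrable.mono' (integrable_const 1) ?_ ?_
    · exact hmeas.aestronglyMeasurable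
    · filter_upwards with p
      by_cases h : p.2 ≤ p.1 <;> simp [Function.uncurry, h]
  have swap := integral_integral_swap hintf
  have left : (∫ y, ∫ u in Set.Ioc x b, (if u ≤ y then (1:ℝ) else 0) ∂volume ∂m)
      = ∫ y, (volume (Set.Ioc x b ∩ Set.Iic y)).toReal ∂m := by
    congr 1; ext y
    have : (fun u => if u ≤ y then (1:ℝ) else 0)
        = Set.indicator (Set.Iic y) (fun _ => (1:ℝ)) := by
      ext u; by_cases h : u ≤ y <;> simp [h]
    rw [this, integral_indicator_const (1:ℝ) measurableSet_Iic,
      Measure.real, Measure.restrict_apply measurableSet_Iic, Set.inter_comm]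
    simp
  have right : (∫ u in Set.Ioc x b, ∫ y, (if u ≤ y then (1:ℝ) else 0) ∂m ∂volume)
      = ∫ u in Set.Ioc x b, (m (Set.Ici u)).toReal := by
    congr 1; ext u
    have : (fun y => if u ≤ y then (1:ℝ) else 0)
        = Set.indicator (Set.Ici u) (fun _ => (1:ℝ)) := by
      ext z; by_cases h : u ≤ z <;> simp [h]
    rw [this, integral_indicator_const (1:ℝ) measurableSet_Ici]
    simp
    rfl
  rw [← integral_sub (int_pos h x) (int_pos h b)]
  calc (∫ y, (max (y - x) 0 - max (y - b) 0) ∂m)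
      = ∫ y, (volume (Set.Ioc x b ∩ Set.Iic y)).toReal ∂m := by
        congr 1; ext y; exact key y
    _ = ∫ u in Set.Ioc x b, (m (Set.Ici u)).toReal := by
        rw [← left, ← right]; exact swap

lemma G_antitone (μ : Measure ℝ) [IsFiniteMeasure μ] :
    Antitone (fun u : ℝ => (μ (Set.Ici u)).toReal) := fun u v huv =>
  ENNReal.toReal_mono (measure_ne_top μ _)
    (measure_mono (Set.Ici_subset_Ici.mpr huv))

lemma G_integrableOn (μ : Measure ℝ) [IsProbabilityMeasure μ] (x b : ℝ) :
    IntegrableOn (fun u : ℝ => (μ (Set.Ici u)).toReal) (Set.Ioc x b) volume := by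
  haveI : IsFiniteMeasure (volume.restrict (Set.Ioc x b)) := by
    constructor
    rw [Measure.restrict_apply_univ, Real.volume_Ioc]
    exact ENNReal.ofReal_lt_top
  refine Integrable.mono' (integrable_const 1) ?_ ?_
  · exact ((G_antitone μ).measurable).aestronglyMeasurable
  · filter_upwards with u
    rw [Real.norm_eq_abs, abs_of_nonneg ENNReal.toReal_nonneg]
    calc (μ (Set.Ici u)).toReal ≤ (μ Set.univ).toReal :=
          ENNReal.toReal_mono (measure_ne_top μ _) (measure_mono (Set.subset_univ _))
      _ = 1 := by simp

lemma G_le_one (μ : Measure ℝ) [IsProbabilityMeasure μ] (u : ℝ) :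
    (μ (Set.Ici u)).toReal ≤ 1 := by
  calc (μ (Set.Ici u)).toReal ≤ (μ Set.univ).toReal :=
        ENNReal.toReal_mono (measure_ne_top μ _) (measure_mono (Set.subset_univ _))
    _ = 1 := by simp

lemma gronwall_tp2 (μ₁ μ₂ : Measure ℝ) [IsProbabilityMeasure μ₁] [IsProbabilityMeasure μ₂]
    (h₁ : Integrable (fun y : ℝ => y) μ₁) (h₂ : Integrable (fun y : ℝ => y) μ₂)
    {a b : ℝ} (hab : a < b)
    (hkey : ∀ u ∈ Set.Icc a b,
      (∫ y, max (y - u) 0 ∂μ₁) * (μ₂ (Set.Ici u)).toReal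
        ≤ (∫ y, max (y - u) 0 ∂μ₂) * (μ₁ (Set.Ici u)).toReal) :
    (∫ y, max (y - a) 0 ∂μ₂) * (∫ y, max (y - b) 0 ∂μ₁)
      ≤ (∫ y, max (y - a) 0 ∂μ₁) * (∫ y, max (y - b) 0 ∂μ₂) := by
  set C₁ : ℝ → ℝ := fun x => ∫ y, max (y - x) 0 ∂μ₁ with hC₁def
  set C₂ : ℝ → ℝ := fun x => ∫ y, max (y - x) 0 ∂μ₂ with hC₂def
  set G₁ : ℝ → ℝ := fun u => (μ₁ (Set.Ici u)).toReal with hG₁def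
  set G₂ : ℝ → ℝ := fun u => (μ₂ (Set.Ici u)).toReal with hG₂def
  rcases eq_or_lt_of_le (pos_nonneg μ₁ b) with hB₁ | hB₁
  · -- C₁ b = 0 : trivial
    rw [← hB₁, mul_zero]
    exact mul_nonneg (pos_nonneg μ₁ a) (pos_nonneg μ₂ b)
  set B₁ : ℝ := C₁ b with hB₁def
  set B₂ : ℝ := C₂ b with hB₂def
  have hB₂0 : 0 ≤ B₂ := pos_nonneg μ₂ b
  set ψ : ℝ → ℝ := fun x => C₂ x * B₁ - C₁ x * B₂ with hψdef
  have hC₁lb : ∀ u ∈ Set.Icc a b, B₁ ≤ C₁ u := fun u hu => pos_mono h₁ hu.2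
  have hC₁pos : ∀ u ∈ Set.Icc a b, 0 < C₁ u := fun u hu => lt_of_lt_of_le hB₁ (hC₁lb u hu)
  -- integral representation of ψ on [a,b]
  have hψint : ∀ x ∈ Set.Icc a b,
      ψ x = ∫ u in Set.Ioc x b, (B₁ * G₂ u - B₂ * G₁ u) ∂volume := by
    intro x hx
    have e₁ := pos_diff_eq μ₁ hx.2 h₁
    have e₂ := pos_diff_eq μ₂ hx.2 h₂
    have : ψ x = B₁ * (C₂ x - B₂) - B₂ * (C₁ x - B₁) := by ring
    rw [this, e₁, e₂, ← integral_const_mul, ← integral_const_mul, ← integral_sub]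
    · exact (G_integrableOn μ₂ x b).const_mul B₁
    · exact (G_integrableOn μ₁ x b).const_mul B₂
  -- pointwise bound
  have hpt : ∀ u ∈ Set.Icc a b, ∀ D : ℝ, 0 ≤ D → ψ u ≤ D →
      B₁ * G₂ u - B₂ * G₁ u ≤ (1 / B₁) * D := by
    intro u hu D hD hψu
    have hc₁ := hC₁pos u hu
    have hk := hkey u hu
    have hG₁0 : 0 ≤ G₁ u := ENNReal.toReal_nonneg
    have hstep1 : B₁ * G₂ u - B₂ * G₁ u ≤ (G₁ u / C₁ u) * ψ u := by
      have h1 : B₁ * (C₁ u * G₂ u) ≤ B₁ * (C₂ u * G₁ u) :=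
        mul_le_mul_of_nonneg_left hk (le_of_lt hB₁)
      rw [div_mul_eq_mul_div, le_div_iff₀ hc₁]
      simp only [hψdef]
      nlinarith [h1]
    have hKle : G₁ u / C₁ u ≤ 1 / B₁ :=
      div_le_div₀ (by norm_num) (G_le_one μ₁ u) hB₁ (hC₁lb u hu)
    have hK0 : 0 ≤ G₁ u / C₁ u := div_nonneg hG₁0 hc₁.le
    calc B₁ * G₂ u - B₂ * G₁ u ≤ (G₁ u / C₁ u) * ψ u := hstep1
      _ ≤ (G₁ u / C₁ u) * D := mul_le_mul_of_nonneg_left hψu hK0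
      _ ≤ (1 / B₁) * D := mul_le_mul_of_nonneg_right hKle hD
  set M : ℝ := C₂ a * B₁ with hMdef
  have hM0 : 0 ≤ M := mul_nonneg (pos_nonneg μ₂ a) hB₁.le
  have main : ∀ n : ℕ, ∀ x ∈ Set.Icc a b,
      ψ x ≤ M * (1 / B₁) ^ n * (b - x) ^ n / (n.factorial : ℝ) := by
    intro n
    induction n with
    | zero =>
      intro x hx
      have h1 : C₂ x ≤ C₂ a := pos_mono h₂ hx.1
      have h2 : 0 ≤ C₁ x * B₂ := mul_nonneg (pos_nonneg μ₁ x) hB₂0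
      simp only [pow_zero, Nat.factorial_zero, Nat.cast_one, mul_one, div_one]
      have : C₂ x * B₁ ≤ C₂ a * B₁ := mul_le_mul_of_nonneg_right h1 hB₁.le
      simp only [hψdef, hMdef]
      linarith
    | succ n ih =>
      intro x hx
      have hxb : x ≤ b := hx.2
      have hbound : ∀ u ∈ Set.Ioc x b,
          B₁ * G₂ u - B₂ * G₁ u
            ≤ (1 / B₁) * (M * (1 / B₁) ^ n * (b - u) ^ n / (n.factorial : ℝ)) := by
        intro u hu
        have hu' : u ∈ Set.Icc a b := ⟨le_trans hx.1 hu.1.le, hu.2⟩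
        refine hpt u hu' _ ?_ (ih u hu')
        have : (0:ℝ) ≤ (b - u) ^ n := pow_nonneg (by linarith [hu.2]) n
        positivity
      have hint1 : IntegrableOn (fun u => B₁ * G₂ u - B₂ * G₁ u) (Set.Ioc x b) volume :=
        ((G_integrableOn μ₂ x b).const_mul B₁).sub ((G_integrableOn μ₁ x b).const_mul B₂)
      have hint2 : IntegrableOn
          (fun u => (1 / B₁) * (M * (1 / B₁) ^ n * (b - u) ^ n / (n.factorial : ℝ)))
          (Set.Ioc x b) volume := by
        apply Continuous.integrableOn_Ioc
        fun_prop
      have hle := setIntegral_mono_on hint1 hint2 measurableSet_Ioc hbound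
      rw [← hψint x hx] at hle
      refine le_trans hle ?_
      -- compute the integral
      have hIoc : (∫ u in Set.Ioc x b,
          (1 / B₁) * (M * (1 / B₁) ^ n * (b - u) ^ n / (n.factorial : ℝ)) ∂volume)
          = (1 / B₁) * (M * (1 / B₁) ^ n / (n.factorial : ℝ)) * ((b - x) ^ (n + 1) / (n + 1)) := by
        have : ∀ u : ℝ, (1 / B₁) * (M * (1 / B₁) ^ n * (b - u) ^ n / (n.factorial : ℝ))
            = ((1 / B₁) * (M * (1 / B₁) ^ n / (n.factorial : ℝ))) * (b - u) ^ n := by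
          intro u; ring
        simp_rw [this]
        rw [integral_const_mul]
        congr 1
        rw [← intervalIntegral.integral_of_le hxb]
        have := intervalIntegral.integral_comp_sub_left (a := x) (b := b)
          (fun v => v ^ n) b
        rw [this, sub_self]
        rw [integral_pow]
        push_cast
        ring
      rw [hIoc]
      rw [Nat.factorial_succ]
      have hfac : ((n.factorial : ℝ)) ≠ 0 := Nat.cast_ne_zero.mpr n.factorial_ne_zero
      have hn1 : ((n:ℝ) + 1) ≠ 0 := by positivity
      push_cast
      field_simp
      ring_nf
      apply le_of_eq
      ring
  -- pass to the limit
  have htend : Filter.Tendsto (fun n : ℕ => M * (1 / B₁) ^ n * (b - a) ^ n / (n.factorial : ℝ))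
      Filter.atTop (nhds 0) := by
    have : (fun n : ℕ => M * (1 / B₁) ^ n * (b - a) ^ n / (n.factorial : ℝ))
        = fun n : ℕ => M * (((1 / B₁) * (b - a)) ^ n / (n.factorial : ℝ)) := by
      ext n; rw [mul_pow]; ring
    rw [this]
    have := (FloorSemiring.tendsto_pow_div_factorial_atTop ((1 / B₁) * (b - a))).const_mul M
    simpa using this
  have hψa : ψ a ≤ 0 :=
    ge_of_tendsto' htend fun n => main n a ⟨le_refl a, hab.le⟩
  simp only [hψdef] at hψa
  linarith

lemma dirac_integrable (f : ℝ → ℝ) (a : ℝ) : Integrable f (Measure.dirac a) := by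
  refine (integrable_const (f a)).congr ?_
  rw [Filter.EventuallyEq, MeasureTheory.ae_dirac_eq]
  simp

lemma nu_integrable {m : Measure ℝ} {U : Set ℝ} {c d : ℝ} (a b : ℝ)
    {f : ℝ → ℝ} (hf : Integrable f m) :
    Integrable f (m.restrict U + ENNReal.ofReal c • Measure.dirac a
      + ENNReal.ofReal d • Measure.dirac b) :=
  ((hf.restrict.add_measure
    ((dirac_integrable f a).smul_measure ENNReal.ofReal_ne_top)).add_measure
    ((dirac_integrable f b).smul_measure ENNReal.ofReal_ne_top))

lemma nu_integral {m : Measure ℝ} {U : Set ℝ} {c d : ℝ}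
    (hc : 0 ≤ c) (hd : 0 ≤ d) (a b : ℝ) {f : ℝ → ℝ} (hf : Integrable f m) :
    (∫ y, f y ∂(m.restrict U + ENNReal.ofReal c • Measure.dirac a
      + ENNReal.ofReal d • Measure.dirac b))
      = (∫ y in U, f y ∂m) + c * f a + d * f b := by
  rw [integral_add_measure (hf.restrict.add_measure
      ((dirac_integrable f a).smul_measure ENNReal.ofReal_ne_top))
      ((dirac_integrable f b).smul_measure ENNReal.ofReal_ne_top),
    integral_add_measure hf.restrict
      ((dirac_integrable f a).smul_measure ENNReal.ofReal_ne_top),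
    integral_smul_measure, integral_smul_measure, integral_dirac, integral_dirac,
    ENNReal.toReal_ofReal hc, ENNReal.toReal_ofReal hd]
  simp [smul_eq_mul]

noncomputable def alphaI (m : Measure ℝ) (a b : ℝ) : ℝ :=
  (b - a)⁻¹ * ∫ y in Set.Icc a b, (b - y) ∂m

noncomputable def betaI (m : Measure ℝ) (a b : ℝ) : ℝ :=
  (b - a)⁻¹ * ∫ y in Set.Icc a b, (y - a) ∂m

noncomputable def cens (m : Measure ℝ) (a b : ℝ) : Measure ℝ :=
  m.restrict (Set.Iio a ∪ Set.Ioi b) + ENNReal.ofReal (alphaI m a b) • Measure.dirac a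
    + ENNReal.ofReal (betaI m a b) • Measure.dirac b

section censoring

variable {m : Measure ℝ} {a b : ℝ}

lemma alphaI_nonneg (hab : a ≤ b) : 0 ≤ alphaI m a b :=
  mul_nonneg (inv_nonneg.mpr (by linarith))
    (setIntegral_nonneg measurableSet_Icc fun y hy => by linarith [hy.2])

lemma betaI_nonneg (hab : a ≤ b) : 0 ≤ betaI m a b :=
  mul_nonneg (inv_nonneg.mpr (by linarith))
    (setIntegral_nonneg measurableSet_Icc fun y hy => by linarith [hy.1])

lemma compl_two : (Set.Iio a ∪ Set.Ioi b)ᶜ = Set.Icc a b := by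
  rw [Set.compl_union, compl_Iio, compl_Ioi, Set.Ici_inter_Iic]

lemma measU : MeasurableSet (Set.Iio a ∪ Set.Ioi b) :=
  measurableSet_Iio.union measurableSet_Ioi

lemma mass_eq [IsFiniteMeasure m] (hab : a < b) (hm : Integrable (fun y : ℝ => y) m) :
    ENNReal.ofReal (alphaI m a b) + ENNReal.ofReal (betaI m a b) = m (Set.Icc a b) := by
  rw [← ENNReal.ofReal_add (alphaI_nonneg hab.le) (betaI_nonneg hab.le)]
  have hsum : alphaI m a b + betaI m a b = (m (Set.Icc a b)).toReal := by
    have h1 : IntegrableOn (fun y : ℝ => b - y) (Set.Icc a b) m :=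
      ((integrable_const b).sub hm).restrict
    have h2 : IntegrableOn (fun y : ℝ => y - a) (Set.Icc a b) m :=
      (hm.sub (integrable_const a)).restrict
    rw [alphaI, betaI, ← mul_add, ← integral_add h1 h2]
    have : (fun y : ℝ => (b - y) + (y - a)) = fun _ : ℝ => (b - a) := by ext y; ring
    rw [this, setIntegral_const, smul_eq_mul]
    have hba : b - a ≠ 0 := by linarith
    field_simp
    rfl
  rw [hsum, ENNReal.ofReal_toReal (measure_ne_top m _)]

lemma cens_prob [IsProbabilityMeasure m] (hab : a < b)
    (hm : Integrable (fun y : ℝ => y) m) : IsProbabilityMeasure (cens m a b) := by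
  constructor
  have hdisj : Disjoint (Set.Iio a ∪ Set.Ioi b) (Set.Icc a b) := by
    rw [← compl_two]; exact disjoint_compl_right
  rw [cens, Measure.add_apply, Measure.add_apply, Measure.smul_apply, Measure.smul_apply,
    Measure.restrict_apply_univ, Measure.dirac_apply_of_mem (Set.mem_univ a),
    Measure.dirac_apply_of_mem (Set.mem_univ b), smul_eq_mul, smul_eq_mul,
    mul_one, mul_one, add_assoc, mass_eq hab hm, ← measure_union hdisj measurableSet_Icc]
  rw [Set.union_comm, ← compl_two, Set.compl_union_self, measure_univ]

lemma cens_integrable (a b : ℝ) (hm : Integrable (fun y : ℝ => y) m) {f : ℝ → ℝ}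
    (hf : Integrable f m) : Integrable f (cens m a b) :=
  nu_integrable a b hf

lemma cens_integral (hab : a < b) {f : ℝ → ℝ} (hf : Integrable f m) :
    (∫ y, f y ∂(cens m a b))
      = (∫ y in Set.Iio a ∪ Set.Ioi b, f y ∂m) + alphaI m a b * f a + betaI m a b * f b :=
  nu_integral (alphaI_nonneg hab.le) (betaI_nonneg hab.le) a b hf

end censoring

section censoring2

variable {m : Measure ℝ} {a b : ℝ}

lemma cens_centered [IsProbabilityMeasure m] (hab : a < b)
    (hm : Integrable (fun y : ℝ => y) m) (h0 : (∫ y, y ∂m) = 0) :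
    (∫ y, y ∂(cens m a b)) = 0 := by
  rw [cens_integral hab hm]
  have hba : b - a ≠ 0 := by intro h; linarith
  have hsplit : (∫ y in Set.Iio a ∪ Set.Ioi b, y ∂m) + (∫ y in Set.Icc a b, y ∂m)
      = ∫ y, y ∂m := by
    have := integral_add_compl (measU (a := a) (b := b)) hm
    rwa [compl_two] at this
  have h1 : IntegrableOn (fun y : ℝ => a * (b - y)) (Set.Icc a b) m :=
    (((integrable_const b).sub hm).restrict).const_mul a
  have h2 : IntegrableOn (fun y : ℝ => b * (y - a)) (Set.Icc a b) m :=
    ((hm.sub (integrable_const a)).restrict).const_mul b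
  have e : a * (∫ y in Set.Icc a b, (b - y) ∂m) + b * (∫ y in Set.Icc a b, (y - a) ∂m)
      = (b - a) * ∫ y in Set.Icc a b, y ∂m := by
    rw [← integral_const_mul, ← integral_const_mul, ← integral_add h1 h2,
      ← integral_const_mul]
    congr 1
    ext y
    ring
  rw [alphaI, betaI]
  have : (b - a)⁻¹ * (∫ y in Set.Icc a b, (b - y) ∂m) * a
      + (b - a)⁻¹ * (∫ y in Set.Icc a b, (y - a) ∂m) * b = ∫ y in Set.Icc a b, y ∂m := by
    field_simp
    linarith [e]
  linarith [hsplit, h0, this]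

lemma cens_pos_integral [IsProbabilityMeasure m] (hab : a < b)
    (hm : Integrable (fun y : ℝ => y) m) (x : ℝ) :
    (∫ y, max (y - x) 0 ∂(cens m a b)) =
      if x ∈ Set.Icc a b then
        ((b - x) / (b - a)) * (∫ y, max (y - a) 0 ∂m)
          + ((x - a) / (b - a)) * (∫ y, max (y - b) 0 ∂m)
      else ∫ y, max (y - x) 0 ∂m := by
  have hba : (0:ℝ) < b - a := by linarith
  rw [cens_integral hab (int_pos hm x)]
  have hsplit : ∀ z : ℝ, (∫ y, max (y - z) 0 ∂m)
      = (∫ y in Set.Iio a ∪ Set.Ioi b, max (y - z) 0 ∂m)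
        + ∫ y in Set.Icc a b, max (y - z) 0 ∂m := by
    intro z
    have := integral_add_compl (measU (a := a) (b := b)) (int_pos hm z)
    rw [compl_two] at this
    exact this.symm
  by_cases hx : x ∈ Set.Icc a b
  · obtain ⟨hax, hxb⟩ := hx
    rw [if_pos ⟨hax, hxb⟩, hsplit a, hsplit b]
    have hIa : (∫ y in Set.Icc a b, max (y - a) 0 ∂m) = ∫ y in Set.Icc a b, (y - a) ∂m :=
      setIntegral_congr_fun measurableSet_Icc fun y hy => max_eq_left (by linarith [hy.1])
    have hIb : (∫ y in Set.Icc a b, max (y - b) 0 ∂m) = 0 := by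
      have : (∫ y in Set.Icc a b, max (y - b) 0 ∂m) = ∫ _ in Set.Icc a b, (0:ℝ) ∂m :=
        setIntegral_congr_fun measurableSet_Icc fun y hy => max_eq_right (by linarith [hy.2])
      rw [this, integral_zero]
    have i1 : IntegrableOn (fun y : ℝ => ((b - x) / (b - a)) * max (y - a) 0)
        (Set.Iio a ∪ Set.Ioi b) m := ((int_pos hm a).restrict).const_mul _
    have i2 : IntegrableOn (fun y : ℝ => ((x - a) / (b - a)) * max (y - b) 0)
        (Set.Iio a ∪ Set.Ioi b) m := ((int_pos hm b).restrict).const_mul _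
    have hkeyU : (∫ y in Set.Iio a ∪ Set.Ioi b, max (y - x) 0 ∂m)
        = ((b - x) / (b - a)) * (∫ y in Set.Iio a ∪ Set.Ioi b, max (y - a) 0 ∂m)
          + ((x - a) / (b - a)) * ∫ y in Set.Iio a ∪ Set.Ioi b, max (y - b) 0 ∂m := by
      rw [← integral_const_mul, ← integral_const_mul, ← integral_add i1 i2]
      apply setIntegral_congr_fun measU
      intro y hy
      show max (y - x) 0
        = (b - x) / (b - a) * max (y - a) 0 + (x - a) / (b - a) * max (y - b) 0
      rcases hy with hy | hy
      · rw [Set.mem_Iio] at hy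
        rw [max_eq_right (by linarith), max_eq_right (by linarith),
          max_eq_right (by linarith)]
        ring
      · rw [Set.mem_Ioi] at hy
        rw [max_eq_left (by linarith), max_eq_left (by linarith),
          max_eq_left (by linarith)]
        field_simp
        ring
    rw [hkeyU, hIa, hIb, betaI, max_eq_right (by linarith : a - x ≤ 0),
      max_eq_left (by linarith : (0:ℝ) ≤ b - x)]
    field_simp
    ring
  · rw [if_neg hx, hsplit x]
    rw [Set.mem_Icc, not_and_or, not_le, not_le] at hx
    rcases hx with hx | hx
    · have hIx : (∫ y in Set.Icc a b, max (y - x) 0 ∂m) = ∫ y in Set.Icc a b, (y - x) ∂m :=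
        setIntegral_congr_fun measurableSet_Icc fun y hy => max_eq_left (by linarith [hy.1])
      have h1 : IntegrableOn (fun y : ℝ => (a - x) * (b - y)) (Set.Icc a b) m :=
        (((integrable_const b).sub hm).restrict).const_mul _
      have h2 : IntegrableOn (fun y : ℝ => (b - x) * (y - a)) (Set.Icc a b) m :=
        ((hm.sub (integrable_const a)).restrict).const_mul _
      have e : (a - x) * (∫ y in Set.Icc a b, (b - y) ∂m)
          + (b - x) * (∫ y in Set.Icc a b, (y - a) ∂m)
          = (b - a) * ∫ y in Set.Icc a b, (y - x) ∂m := by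
        rw [← integral_const_mul, ← integral_const_mul, ← integral_add h1 h2,
          ← integral_const_mul]
        congr 1
        ext y
        ring
      rw [hIx, alphaI, betaI, max_eq_left (by linarith : (0:ℝ) ≤ a - x),
        max_eq_left (by linarith : (0:ℝ) ≤ b - x)]
      have : (b - a)⁻¹ * (∫ y in Set.Icc a b, (b - y) ∂m) * (a - x)
          + (b - a)⁻¹ * (∫ y in Set.Icc a b, (y - a) ∂m) * (b - x)
          = ∫ y in Set.Icc a b, (y - x) ∂m := by
        field_simp
        linarith [e]
      linarith [this]
    · have hIx : (∫ y in Set.Icc a b, max (y - x) 0 ∂m) = 0 := by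
        have : (∫ y in Set.Icc a b, max (y - x) 0 ∂m) = ∫ _ in Set.Icc a b, (0:ℝ) ∂m :=
          setIntegral_congr_fun measurableSet_Icc fun y hy => max_eq_right (by linarith [hy.2])
        rw [this, integral_zero]
      rw [hIx, max_eq_right (by linarith : a - x ≤ 0), max_eq_right (by linarith : b - x ≤ 0)]
      ring

end censoring2

section censoring3

variable {m : Measure ℝ} {a b : ℝ}

lemma cens_Ici_apply (hab : a < b) (x : ℝ) :
    cens m a b (Set.Ici x)
      = m (Set.Ici x ∩ (Set.Iio a ∪ Set.Ioi b))
        + ENNReal.ofReal (alphaI m a b) * (Measure.dirac a (Set.Ici x))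
        + ENNReal.ofReal (betaI m a b) * (Measure.dirac b (Set.Ici x)) := by
  rw [cens, Measure.add_apply, Measure.add_apply, Measure.smul_apply, Measure.smul_apply,
    Measure.restrict_apply measurableSet_Ici, smul_eq_mul, smul_eq_mul]

lemma cens_Ici_of_le [IsFiniteMeasure m] (hab : a < b)
    (hm : Integrable (fun y : ℝ => y) m) {x : ℝ} (hx : x ≤ a) :
    cens m a b (Set.Ici x) = m (Set.Ici x) := by
  rw [cens_Ici_apply hab, Measure.dirac_apply_of_mem (by simpa using hx),
    Measure.dirac_apply_of_mem (by simp; linarith), mul_one, mul_one, add_assoc,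
    mass_eq hab hm]
  have hdisj : Disjoint (Set.Ici x ∩ (Set.Iio a ∪ Set.Ioi b)) (Set.Icc a b) := by
    rw [← compl_two]
    exact disjoint_compl_right.mono_left Set.inter_subset_right
  rw [← measure_union hdisj measurableSet_Icc]
  congr 1
  ext y
  simp only [Set.mem_union, Set.mem_inter_iff, Set.mem_Ici, Set.mem_Iio, Set.mem_Ioi,
    Set.mem_Icc]
  constructor
  · rintro (⟨h, _⟩ | ⟨h1, _⟩)
    · exact h
    · linarith
  · intro h
    rcases lt_or_ge y a with h' | h'
    · exact Or.inl ⟨h, Or.inl h'⟩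
    rcases le_or_gt y b with h'' | h''
    · exact Or.inr ⟨h', h''⟩
    · exact Or.inl ⟨h, Or.inr h''⟩

lemma cens_Ici_of_mid (hab : a < b) {x : ℝ} (hx1 : a < x) (hx2 : x ≤ b) :
    cens m a b (Set.Ici x) = m (Set.Ioi b) + ENNReal.ofReal (betaI m a b) := by
  rw [cens_Ici_apply hab]
  have h1 : Measure.dirac a (Set.Ici x) = 0 := by
    rw [Measure.dirac_apply' _ measurableSet_Ici,
      Set.indicator_of_notMem (by simp; linarith)]
  have h2 : Measure.dirac b (Set.Ici x) = 1 := Measure.dirac_apply_of_mem (by simpa using hx2)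
  have h3 : Set.Ici x ∩ (Set.Iio a ∪ Set.Ioi b) = Set.Ioi b := by
    ext y
    simp only [Set.mem_inter_iff, Set.mem_Ici, Set.mem_Iio, Set.mem_Ioi, Set.mem_union]
    constructor
    · rintro ⟨h, h' | h'⟩
      · linarith
      · exact h'
    · intro h
      exact ⟨by linarith, Or.inr h⟩
  rw [h1, h2, h3, mul_zero, mul_one, add_zero]

lemma cens_Ici_of_gt (hab : a < b) {x : ℝ} (hx : b < x) :
    cens m a b (Set.Ici x) = m (Set.Ici x) := by
  rw [cens_Ici_apply hab]
  have h1 : Measure.dirac a (Set.Ici x) = 0 := by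
    rw [Measure.dirac_apply' _ measurableSet_Ici,
      Set.indicator_of_notMem (by simp; linarith)]
  have h2 : Measure.dirac b (Set.Ici x) = 0 := by
    rw [Measure.dirac_apply' _ measurableSet_Ici,
      Set.indicator_of_notMem (by simpa using hx)]
  have h3 : Set.Ici x ∩ (Set.Iio a ∪ Set.Ioi b) = Set.Ici x :=
    Set.inter_eq_left.mpr fun y hy => Or.inr (by simp only [Set.mem_Ici] at hy; simp; linarith)
  rw [h1, h2, h3, mul_zero, mul_zero, add_zero, add_zero]

lemma mass_mid [IsProbabilityMeasure m] (hab : a < b)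
    (hm : Integrable (fun y : ℝ => y) m) :
    (∫ y, max (y - a) 0 ∂m) - (∫ y, max (y - b) 0 ∂m)
      = (b - a) * ((m (Set.Ioi b)).toReal + betaI m a b) := by
  have hba : (0:ℝ) < b - a := by linarith
  have hsplit : ∀ z : ℝ, (∫ y, max (y - z) 0 ∂m)
      = (∫ y in Set.Iio a ∪ Set.Ioi b, max (y - z) 0 ∂m)
        + ∫ y in Set.Icc a b, max (y - z) 0 ∂m := by
    intro z
    have := integral_add_compl (measU (a := a) (b := b)) (int_pos hm z)
    rw [compl_two] at this
    exact this.symm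
  have hdisj : Disjoint (Set.Iio a) (Set.Ioi b) := by
    rw [Set.disjoint_left]
    intro y h1 h2
    simp only [Set.mem_Iio] at h1
    simp only [Set.mem_Ioi] at h2
    linarith
  have hU : ∀ z : ℝ, (∫ y in Set.Iio a ∪ Set.Ioi b, max (y - z) 0 ∂m)
      = (∫ y in Set.Iio a, max (y - z) 0 ∂m) + ∫ y in Set.Ioi b, max (y - z) 0 ∂m :=
    fun z => setIntegral_union hdisj measurableSet_Ioi
      ((int_pos hm z).restrict) ((int_pos hm z).restrict)
  have hIa : (∫ y in Set.Icc a b, max (y - a) 0 ∂m) = ∫ y in Set.Icc a b, (y - a) ∂m :=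
    setIntegral_congr_fun measurableSet_Icc fun y hy => max_eq_left (by linarith [hy.1])
  have hIb : (∫ y in Set.Icc a b, max (y - b) 0 ∂m) = 0 := by
    have : (∫ y in Set.Icc a b, max (y - b) 0 ∂m) = ∫ _ in Set.Icc a b, (0:ℝ) ∂m :=
      setIntegral_congr_fun measurableSet_Icc fun y hy => max_eq_right (by linarith [hy.2])
    rw [this, integral_zero]
  have hLa : (∫ y in Set.Iio a, max (y - a) 0 ∂m) = 0 := by
    have : (∫ y in Set.Iio a, max (y - a) 0 ∂m) = ∫ _ in Set.Iio a, (0:ℝ) ∂m :=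
      setIntegral_congr_fun measurableSet_Iio fun y hy =>
        max_eq_right (by simp only [Set.mem_Iio] at hy; linarith)
    rw [this, integral_zero]
  have hLb : (∫ y in Set.Iio a, max (y - b) 0 ∂m) = 0 := by
    have : (∫ y in Set.Iio a, max (y - b) 0 ∂m) = ∫ _ in Set.Iio a, (0:ℝ) ∂m :=
      setIntegral_congr_fun measurableSet_Iio fun y hy =>
        max_eq_right (by simp only [Set.mem_Iio] at hy; linarith)
    rw [this, integral_zero]
  have hRa : (∫ y in Set.Ioi b, max (y - a) 0 ∂m) = ∫ y in Set.Ioi b, (y - a) ∂m :=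
    setIntegral_congr_fun measurableSet_Ioi fun y hy =>
      max_eq_left (by simp only [Set.mem_Ioi] at hy; linarith)
  have hRb : (∫ y in Set.Ioi b, max (y - b) 0 ∂m) = ∫ y in Set.Ioi b, (y - b) ∂m :=
    setIntegral_congr_fun measurableSet_Ioi fun y hy =>
      max_eq_left (by simp only [Set.mem_Ioi] at hy; linarith)
  have hdiff : (∫ y in Set.Ioi b, (y - a) ∂m) - (∫ y in Set.Ioi b, (y - b) ∂m)
      = (b - a) * (m (Set.Ioi b)).toReal := by
    have j1 : IntegrableOn (fun y : ℝ => y - a) (Set.Ioi b) m :=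
      (hm.sub (integrable_const a)).restrict
    have j2 : IntegrableOn (fun y : ℝ => y - b) (Set.Ioi b) m :=
      (hm.sub (integrable_const b)).restrict
    rw [← integral_sub j1 j2]
    have : (fun y : ℝ => (y - a) - (y - b)) = fun _ : ℝ => (b - a) := by ext y; ring
    rw [this, setIntegral_const, smul_eq_mul, mul_comm]
    rfl
  rw [hsplit a, hsplit b, hU a, hU b, hIa, hIb, hLa, hLb, hRa, hRb, betaI]
  field_simp
  linarith [hdiff]

end censoring3

lemma cens_pos_of_out {m : Measure ℝ} {a b : ℝ} [IsProbabilityMeasure m] (hab : a < b)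
    (hm : Integrable (fun y : ℝ => y) m) {x : ℝ} (hx : x ≤ a ∨ b < x) :
    (∫ y, max (y - x) 0 ∂(cens m a b)) = ∫ y, max (y - x) 0 ∂m := by
  rw [cens_pos_integral hab hm x]
  rcases hx with hx | hx
  · rcases eq_or_lt_of_le hx with rfl | hlt
    · rw [if_pos ⟨le_rfl, hab.le⟩, sub_self, zero_div, zero_mul, add_zero,
        div_self (by linarith : b - x ≠ 0), one_mul]
    · rw [if_neg (fun h => absurd h.1 (not_le.mpr hlt))]
  · rw [if_neg (fun h => absurd h.2 (not_le.mpr hx))]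

lemma final_algebra {A₁ B₁ A₂ B₂ x a b : ℝ} (hba : 0 < b - a)
    (hm₁ : 0 < (A₁ - B₁) / (b - a)) (hm₂ : 0 < (A₂ - B₂) / (b - a))
    (hTP2 : A₂ * B₁ ≤ A₁ * B₂) :
    x + (((b - x) / (b - a)) * A₁ + ((x - a) / (b - a)) * B₁) / ((A₁ - B₁) / (b - a))
      ≤ x + (((b - x) / (b - a)) * A₂ + ((x - a) / (b - a)) * B₂) / ((A₂ - B₂) / (b - a)) := by
  apply add_le_add le_rfl
  rw [div_le_div_iff₀ hm₁ hm₂]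
  have key : (((b - x) / (b - a)) * A₂ + ((x - a) / (b - a)) * B₂) * ((A₁ - B₁) / (b - a))
      - (((b - x) / (b - a)) * A₁ + ((x - a) / (b - a)) * B₁) * ((A₂ - B₂) / (b - a))
      = (A₁ * B₂ - A₂ * B₁) / (b - a) := by
    field_simp
    ring
  have h0 : 0 ≤ (A₁ * B₂ - A₂ * B₁) / (b - a) := div_nonneg (by linarith) hba.le
  linarith

/-- Censoring transformation: if `(μ_t)_{t≥0}` is a family of integrable centered
probability measures increasing in the MRL order with integrated survival function `C`,
and `a < b`, then the censored measures
`μ_t^{a,b} = 1_{(-∞,a)∪(b,∞)} μ_t + α_t δ_a + β_t δ_b` are centered probability measures,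
their integrated survival function is the linear interpolation of `C(t,·)` on `[a,b]`
(and `C(t,·)` elsewhere), and the family `(μ_t^{a,b})_{t≥0}` still increases in the
MRL order. -/
theorem censoring_preserves_mrl (μ : ℝ → Measure ℝ)
    (hprob : ∀ t, 0 ≤ t → IsProbabilityMeasure (μ t))
    (hint : ∀ t, 0 ≤ t → Integrable (fun y : ℝ => y) (μ t))
    (hcentered : ∀ t, 0 ≤ t → (∫ y, y ∂(μ t)) = 0)
    (Ψ : ℝ → ℝ → ℝ)
    (hΨ : ∀ t, 0 ≤ t → ∀ x : ℝ, Ψ t x =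
      if μ t (Set.Ici x) ≠ 0 then
        x + (∫ y in Set.Ici x, (y - x) ∂(μ t)) / (μ t (Set.Ici x)).toReal
      else x)
    (hmrl : ∀ t₁ t₂ : ℝ, 0 ≤ t₁ → t₁ ≤ t₂ → ∀ x : ℝ, Ψ t₁ x ≤ Ψ t₂ x)
    (C : ℝ → ℝ → ℝ)
    (hC : ∀ t, 0 ≤ t → ∀ x : ℝ, C t x = ∫ y, max (y - x) 0 ∂(μ t))
    (a b : ℝ) (hab : a < b)
    (α β : ℝ → ℝ)
    (hα : ∀ t, 0 ≤ t → α t = (b - a)⁻¹ * ∫ y in Set.Icc a b, (b - y) ∂(μ t))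
    (hβ : ∀ t, 0 ≤ t → β t = (b - a)⁻¹ * ∫ y in Set.Icc a b, (y - a) ∂(μ t))
    (ν : ℝ → Measure ℝ)
    (hν : ∀ t, 0 ≤ t → ν t =
      (μ t).restrict (Set.Iio a ∪ Set.Ioi b) +
        ENNReal.ofReal (α t) • Measure.dirac a +
        ENNReal.ofReal (β t) • Measure.dirac b)
    (Ψν : ℝ → ℝ → ℝ)
    (hΨν : ∀ t, 0 ≤ t → ∀ x : ℝ, Ψν t x =
      if ν t (Set.Ici x) ≠ 0 then
        x + (∫ y in Set.Ici x, (y - x) ∂(ν t)) / (ν t (Set.Ici x)).toReal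
      else x) :
    (∀ t, 0 ≤ t → IsProbabilityMeasure (ν t) ∧
      Integrable (fun y : ℝ => y) (ν t) ∧ (∫ y, y ∂(ν t)) = 0) ∧
    (∀ t, 0 ≤ t → ∀ x : ℝ,
      (∫ y, max (y - x) 0 ∂(ν t)) =
        if x ∈ Set.Icc a b then
          ((b - x) / (b - a)) * C t a + ((x - a) / (b - a)) * C t b
        else C t x) ∧
    (∀ t₁ t₂ : ℝ, 0 ≤ t₁ → t₁ ≤ t₂ → ∀ x : ℝ, Ψν t₁ x ≤ Ψν t₂ x) := by
  have hba : (0:ℝ) < b - a := by linarith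
  have hν' : ∀ t, 0 ≤ t → ν t = cens (μ t) a b := by
    intro t ht
    rw [hν t ht, hα t ht, hβ t ht]
    rfl
  refine ⟨?_, ?_, ?_⟩
  · intro t ht
    haveI := hprob t ht
    rw [hν' t ht]
    exact ⟨cens_prob hab (hint t ht), cens_integrable a b (hint t ht) (hint t ht),
      cens_centered hab (hint t ht) (hcentered t ht)⟩
  · intro t ht x
    haveI := hprob t ht
    rw [hν' t ht, cens_pos_integral hab (hint t ht) x, hC t ht a, hC t ht b, hC t ht x]
  · intro t₁ t₂ ht₁ hle x
    have ht₂ : 0 ≤ t₂ := le_trans ht₁ hle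
    haveI := hprob t₁ ht₁
    haveI := hprob t₂ ht₂
    by_cases hmid : a < x ∧ x ≤ b
    · -- middle case
      obtain ⟨hax, hxb⟩ := hmid
      have hmes : ∀ t, 0 ≤ t → ν t (Set.Ici x)
          = μ t (Set.Ioi b) + ENNReal.ofReal (betaI (μ t) a b) := by
        intro t ht
        rw [hν' t ht]
        exact cens_Ici_of_mid hab hax hxb
      have hval : ∀ t, 0 ≤ t → (∫ y in Set.Ici x, (y - x) ∂(ν t))
          = ((b - x) / (b - a)) * (∫ y, max (y - a) 0 ∂(μ t))
            + ((x - a) / (b - a)) * (∫ y, max (y - b) 0 ∂(μ t)) := by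
        intro t ht
        haveI := hprob t ht
        rw [setInt_Ici, hν' t ht, cens_pos_integral hab (hint t ht) x,
          if_pos (Set.mem_Icc.mpr ⟨hax.le, hxb⟩)]
      have htm : ∀ t, 0 ≤ t → (ν t (Set.Ici x)).toReal
          = ((∫ y, max (y - a) 0 ∂(μ t)) - (∫ y, max (y - b) 0 ∂(μ t))) / (b - a) := by
        intro t ht
        haveI := hprob t ht
        rw [hmes t ht, ENNReal.toReal_add (measure_ne_top _ _) ENNReal.ofReal_ne_top,
          ENNReal.toReal_ofReal (betaI_nonneg hab.le), eq_div_iff (ne_of_gt hba), mul_comm]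
        exact (mass_mid hab (hint t ht)).symm
      have hfin : ∀ t, 0 ≤ t → ν t (Set.Ici x) ≠ ⊤ := by
        intro t ht
        haveI := hprob t ht
        rw [hmes t ht]
        exact ENNReal.add_ne_top.mpr ⟨measure_ne_top _ _, ENNReal.ofReal_ne_top⟩
      have hA₁0 : 0 ≤ ∫ y, max (y - a) 0 ∂(μ t₁) := pos_nonneg _ _
      have hB₁0 : 0 ≤ ∫ y, max (y - b) 0 ∂(μ t₁) := pos_nonneg _ _
      have hA₂0 : 0 ≤ ∫ y, max (y - a) 0 ∂(μ t₂) := pos_nonneg _ _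
      have hB₂0 : 0 ≤ ∫ y, max (y - b) 0 ∂(μ t₂) := pos_nonneg _ _
      have hAB₁ : (∫ y, max (y - b) 0 ∂(μ t₁)) ≤ ∫ y, max (y - a) 0 ∂(μ t₁) :=
        pos_mono (hint t₁ ht₁) hab.le
      have hAB₂ : (∫ y, max (y - b) 0 ∂(μ t₂)) ≤ ∫ y, max (y - a) 0 ∂(μ t₂) :=
        pos_mono (hint t₂ ht₂) hab.le
      rw [hΨν t₁ ht₁ x, hΨν t₂ ht₂ x]
      by_cases h2 : ν t₂ (Set.Ici x) = 0
      · have hB₂z : (∫ y, max (y - b) 0 ∂(μ t₂)) = 0 := by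
          by_contra hB
          have hμ2 : μ t₂ (Set.Ioi b) ≠ 0 := pos_pos_ne hB
          have h2' := h2
          rw [hmes t₂ ht₂] at h2'
          exact hμ2 (add_eq_zero.mp h2').1
        have hA₂z : (∫ y, max (y - a) 0 ∂(μ t₂)) = 0 := by
          have h' := htm t₂ ht₂
          rw [h2] at h'
          simp only [ENNReal.toReal_zero] at h'
          have := (div_eq_zero_iff.mp h'.symm).resolve_right (ne_of_gt hba)
          linarith
        have hΨ2a : Ψ t₂ a = a := by
          rw [hΨ t₂ ht₂ a]
          split_ifs with h
          · rw [setInt_Ici, hA₂z, zero_div, add_zero]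
          · rfl
        have hΨ1a : Ψ t₁ a ≤ a := by
          have := hmrl t₁ t₂ ht₁ hle a
          rwa [hΨ2a] at this
        have hA₁z : (∫ y, max (y - a) 0 ∂(μ t₁)) = 0 := by
          rw [hΨ t₁ ht₁ a] at hΨ1a
          split_ifs at hΨ1a with h
          · rw [setInt_Ici] at hΨ1a
            have hd : 0 < (μ t₁ (Set.Ici a)).toReal :=
              ENNReal.toReal_pos h (measure_ne_top _ _)
            by_contra hA
            have hApos : 0 < ∫ y, max (y - a) 0 ∂(μ t₁) := lt_of_le_of_ne hA₁0 (Ne.symm hA)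
            have : 0 < (∫ y, max (y - a) 0 ∂(μ t₁)) / (μ t₁ (Set.Ici a)).toReal :=
              div_pos hApos hd
            linarith
          · push_neg at h
            exact pos_eq_zero (measure_mono_null Set.Ioi_subset_Ici_self h)
        have hB₁z : (∫ y, max (y - b) 0 ∂(μ t₁)) = 0 :=
          le_antisymm (by linarith [hAB₁, hA₁z]) hB₁0
        have h1 : ν t₁ (Set.Ici x) = 0 := by
          have h' := htm t₁ ht₁
          rw [hA₁z, hB₁z] at h'
          simp only [sub_zero, zero_div] at h'
          exact ((ENNReal.toReal_eq_zero_iff _).mp h').resolve_right (hfin t₁ ht₁)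
        rw [if_neg (by simpa using h1), if_neg (by simpa using h2)]
      · have hm₂pos : 0 < (ν t₂ (Set.Ici x)).toReal :=
          ENNReal.toReal_pos h2 (hfin t₂ ht₂)
        have hD₂0 : 0 ≤ (∫ y in Set.Ici x, (y - x) ∂(ν t₂)) := by
          rw [hval t₂ ht₂]
          exact add_nonneg (mul_nonneg (div_nonneg (by linarith) hba.le) hA₂0)
            (mul_nonneg (div_nonneg (by linarith) hba.le) hB₂0)
        by_cases h1 : ν t₁ (Set.Ici x) = 0
        · rw [if_neg (by simpa using h1), if_pos h2]
          have : 0 ≤ (∫ y in Set.Ici x, (y - x) ∂(ν t₂)) / (ν t₂ (Set.Ici x)).toReal :=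
            div_nonneg hD₂0 hm₂pos.le
          linarith
        · rw [if_pos h1, if_pos h2]
          have hm₁pos : 0 < (ν t₁ (Set.Ici x)).toReal :=
            ENNReal.toReal_pos h1 (hfin t₁ ht₁)
          have hTP2 : (∫ y, max (y - a) 0 ∂(μ t₂)) * (∫ y, max (y - b) 0 ∂(μ t₁))
              ≤ (∫ y, max (y - a) 0 ∂(μ t₁)) * (∫ y, max (y - b) 0 ∂(μ t₂)) := by
            rcases eq_or_lt_of_le hB₁0 with hB | hB
            · rw [← hB, mul_zero]
              exact mul_nonneg hA₁0 hB₂0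
            · apply gronwall_tp2 (μ t₁) (μ t₂) (hint t₁ ht₁) (hint t₂ ht₂) hab
              intro u hu
              have hμ1b : μ t₁ (Set.Ioi b) ≠ 0 := pos_pos_ne (ne_of_gt hB)
              have hG₁ne : μ t₁ (Set.Ici u) ≠ 0 := by
                intro h
                exact hμ1b (measure_mono_null
                  (fun y hy => le_of_lt (lt_of_le_of_lt hu.2 hy)) h)
              have hG₁pos : 0 < (μ t₁ (Set.Ici u)).toReal :=
                ENNReal.toReal_pos hG₁ne (measure_ne_top _ _)
              by_cases hG₂ : μ t₂ (Set.Ici u) = 0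
              · rw [hG₂]
                simp only [ENNReal.toReal_zero, mul_zero]
                exact mul_nonneg (pos_nonneg _ _) ENNReal.toReal_nonneg
              · have hG₂pos : 0 < (μ t₂ (Set.Ici u)).toReal :=
                  ENNReal.toReal_pos hG₂ (measure_ne_top _ _)
                have hcomp := hmrl t₁ t₂ ht₁ hle u
                rw [hΨ t₁ ht₁ u, hΨ t₂ ht₂ u, if_pos hG₁ne, if_pos hG₂,
                  setInt_Ici, setInt_Ici] at hcomp
                have : (∫ y, max (y - u) 0 ∂(μ t₁)) / (μ t₁ (Set.Ici u)).toReal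
                    ≤ (∫ y, max (y - u) 0 ∂(μ t₂)) / (μ t₂ (Set.Ici u)).toReal := by
                  linarith
                exact (div_le_div_iff₀ hG₁pos hG₂pos).mp this
          have hm₁' := hm₁pos
          have hm₂' := hm₂pos
          rw [htm t₁ ht₁] at hm₁'
          rw [htm t₂ ht₂] at hm₂'
          rw [hval t₁ ht₁, hval t₂ ht₂, htm t₁ ht₁, htm t₂ ht₂]
          exact final_algebra hba hm₁' hm₂' hTP2
    · -- outer case : Ψν = Ψ
      have key : ∀ t, 0 ≤ t → Ψν t x = Ψ t x := by
        intro t ht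
        haveI := hprob t ht
        have hout : x ≤ a ∨ b < x := by
          rcases not_and_or.mp hmid with h | h
          · left; linarith [not_lt.mp h]
          · right; exact not_le.mp h
        have hmeq : ν t (Set.Ici x) = μ t (Set.Ici x) := by
          rw [hν' t ht]
          rcases hout with h | h
          · exact cens_Ici_of_le hab (hint t ht) h
          · exact cens_Ici_of_gt hab h
        have hieq : (∫ y in Set.Ici x, (y - x) ∂(ν t)) = ∫ y in Set.Ici x, (y - x) ∂(μ t) := by
          rw [setInt_Ici, setInt_Ici, hν' t ht]
          exact cens_pos_of_out hab (hint t ht) hout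
        rw [hΨν t ht x, hΨ t ht x, hmeq, hieq]
      rw [key t₁ ht₁, key t₂ ht₂]
      exact hmrl t₁ t₂ ht₁ hle x
end
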